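/- arXiv:1907.04015 — 6 statements merged into one kernel-verified Lean document; each statement's English description precedes it below -/
import Mathlib

section
/- Let D = ℝ, ϱ(x) = (σ√(2π))^{-1} exp(−x²/(2σ²)), ψ(x) = exp(−|x|/λ) with σ, λ > 0, so that ω = ϱ/ψ, and κ_a(x) = exp(−a|x|) with a > 0. Let r be a positive integer, 1 ≤ q < p ≤ ∞, and α = r − 1/p + 1/q (so α > r). Then FCTR(p,q,ω,κ_a) = ((1/(aσ))·√(2α/π))^α · (a²πσ²(α−r)/(2α²))^{(α−r)/2} · exp((σ²/2)·((ar/α + 1/λ)² − 1/λ²)) · [1 + erf(σ(ar/α + 1/λ)/√(2(α−r)))]^{α−r} / [1 + erf(σ/(λ√(2α)))]^α. -/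
open MeasureTheory Real Set
open scoped ENNReal

/-- The error function `erf(z) = (2/√π)∫₀^z e^{−t²} dt`. -/
noncomputable def erf (z : ℝ) : ℝ := 2 / Real.sqrt π * ∫ t in (0:ℝ)..z, Real.exp (-t ^ 2)



lemma integrable_gauss1 : Integrable (fun t : ℝ => Real.exp (-t ^ 2)) := by
  simpa using integrable_exp_neg_mul_sq one_pos

lemma integral_comp_add_right_Ioi (g : ℝ → ℝ) (a c : ℝ) :
    (∫ x in Ioi a, g (x + c)) = ∫ x in Ioi (a + c), g x := by
  rw [← integral_indicator measurableSet_Ioi, ← integral_indicator measurableSet_Ioi,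
    ← integral_add_right_eq_self (fun x => (Ioi (a + c)).indicator g x) c]
  congr 1
  funext x
  simp [indicator_apply, mem_Ioi, add_lt_add_iff_right]

lemma integral_Iic_gauss (z : ℝ) :
    ∫ t in Iic z, Real.exp (-t ^ 2) = Real.sqrt π / 2 * (1 + erf z) := by
  have h0 : ∫ t in Iic (0:ℝ), Real.exp (-t ^ 2) = Real.sqrt π / 2 := by
    have := integral_comp_neg_Iic (0:ℝ) (fun t => Real.exp (-t ^ 2))
    simp only [neg_zero, neg_sq] at this
    rw [this]
    have h := integral_gaussian_Ioi 1
    simp only [one_mul, div_one] at h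
    simpa using h
  have hsplit : (∫ t in Iic z, Real.exp (-t ^ 2)) - ∫ t in Iic (0:ℝ), Real.exp (-t ^ 2)
      = ∫ t in (0:ℝ)..z, Real.exp (-t ^ 2) :=
    intervalIntegral.integral_Iic_sub_Iic integrable_gauss1.integrableOn
      integrable_gauss1.integrableOn
  have hπ : Real.sqrt π ≠ 0 := by positivity
  rw [erf]
  have hkey : Real.sqrt π / 2 * (1 + 2 / Real.sqrt π * ∫ t in (0:ℝ)..z, Real.exp (-t ^ 2))
      = Real.sqrt π / 2 + ∫ t in (0:ℝ)..z, Real.exp (-t ^ 2) := by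
    field_simp
  rw [hkey]
  linarith [hsplit, h0]

lemma integral_Ioi_gauss (z : ℝ) :
    ∫ t in Ioi (-z), Real.exp (-t ^ 2) = Real.sqrt π / 2 * (1 + erf z) := by
  rw [← integral_comp_neg_Iic z (fun t => Real.exp (-t ^ 2)), ← integral_Iic_gauss z]
  congr 1; funext t; ring_nf

lemma one_add_erf_pos (z : ℝ) : 0 < 1 + erf z := by
  have h : 0 < ∫ t in Iic z, Real.exp (-t ^ 2) := by
    rw [setIntegral_pos_iff_support_of_nonneg_ae]
    · have : (Function.support fun t : ℝ => Real.exp (-t ^ 2)) = Set.univ := by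
        ext t; simp [Function.support, (Real.exp_pos _).ne']
      rw [this, Set.univ_inter]
      simp [Real.volume_Iic]
    · filter_upwards with t using (Real.exp_pos _).le
    · exact integrable_gauss1.integrableOn
  rw [integral_Iic_gauss] at h
  have hπ : 0 < Real.sqrt π := by positivity
  nlinarith

lemma exp_abs_integral {c : ℝ} (hc : 0 < c) :
    ∫ x : ℝ, Real.exp (-(c * |x|)) = 2 / c := by
  rw [integral_comp_abs (f := fun t => Real.exp (-(c * t)))]
  have h := integral_comp_mul_right_Ioi (fun x => Real.exp (-x)) 0 hc
  simp only [zero_mul, smul_eq_mul, integral_exp_neg_Ioi_zero] at h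
  calc 2 * ∫ x in Ioi (0:ℝ), Real.exp (-(c * x))
      = 2 * ∫ x in Ioi (0:ℝ), Real.exp (-(x * c)) := by
        congr 1; apply setIntegral_congr_fun measurableSet_Ioi; intro x _; ring_nf
    _ = 2 / c := by rw [h]; rw [mul_one]; rw [div_eq_mul_inv]

lemma gauss_shift_integral (s b : ℝ) (hs : 0 < s) :
    ∫ x in Ioi (0:ℝ), Real.exp (-x ^ 2 / (2 * s ^ 2) + b * x)
      = s * Real.sqrt 2 * (Real.sqrt π / 2) * Real.exp (b ^ 2 * s ^ 2 / 2)
        * (1 + erf (b * s / Real.sqrt 2)) := by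
  have hs2 : (Real.sqrt 2) ^ 2 = 2 := Real.sq_sqrt (by norm_num)
  have hkey : ∀ x : ℝ, Real.exp (-x ^ 2 / (2 * s ^ 2) + b * x)
      = Real.exp (b ^ 2 * s ^ 2 / 2)
        * Real.exp (-(((x + -(b * s ^ 2)) * (s * Real.sqrt 2)⁻¹) ^ 2)) := by
    intro x
    rw [← Real.exp_add]
    congr 1
    have h1 : (s * Real.sqrt 2) ^ 2 = s ^ 2 * 2 := by rw [mul_pow, hs2]
    have h2 : ((x + -(b * s ^ 2)) * (s * Real.sqrt 2)⁻¹) ^ 2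
        = (x - b * s ^ 2) ^ 2 / (2 * s ^ 2) := by
      rw [mul_pow, inv_pow, h1]
      field_simp
      ring
    rw [h2]
    field_simp
    ring
  rw [setIntegral_congr_fun measurableSet_Ioi (fun x _ => hkey x), MeasureTheory.integral_const_mul]
  have hinv : (0:ℝ) < (s * Real.sqrt 2)⁻¹ := by positivity
  rw [integral_comp_add_right_Ioi
      (fun y => Real.exp (-((y * (s * Real.sqrt 2)⁻¹) ^ 2))) 0 (-(b * s ^ 2)), zero_add,
    integral_comp_mul_right_Ioi (fun y => Real.exp (-(y ^ 2))) _ hinv]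
  have harg : -(b * s ^ 2) * (s * Real.sqrt 2)⁻¹ = -(b * s / Real.sqrt 2) := by
    have h2 : Real.sqrt 2 ≠ 0 := by positivity
    field_simp
  rw [harg]
  have hg : ∫ x in Ioi (-(b * s / Real.sqrt 2)), Real.exp (-(x ^ 2))
      = Real.sqrt π / 2 * (1 + erf (b * s / Real.sqrt 2)) := by
    have := integral_Ioi_gauss (b * s / Real.sqrt 2)
    simpa using this
  rw [hg, smul_eq_mul, inv_inv]
  ring

lemma gauss_abs_integral (s b : ℝ) (hs : 0 < s) :
    ∫ x : ℝ, Real.exp (-x ^ 2 / (2 * s ^ 2) + b * |x|)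
      = s * Real.sqrt (2 * π) * Real.exp (b ^ 2 * s ^ 2 / 2)
        * (1 + erf (b * s / Real.sqrt 2)) := by
  have h1 : ∫ x : ℝ, Real.exp (-x ^ 2 / (2 * s ^ 2) + b * |x|)
      = ∫ x : ℝ, (fun t => Real.exp (-t ^ 2 / (2 * s ^ 2) + b * t)) |x| := by
    congr 1; funext x; simp only [sq_abs]
  rw [h1, integral_comp_abs (f := fun t => Real.exp (-t ^ 2 / (2 * s ^ 2) + b * t)), gauss_shift_integral s b hs,
    Real.sqrt_mul (by norm_num : (0:ℝ) ≤ 2) π]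
  ring

lemma final_alg (a σ lam α β g1 g2 u : ℝ) (ha : 0 < a) (hσ : 0 < σ)
    (hlam : 0 < lam) (hα : 0 < α) (hβ : 0 < β) (hg1 : 0 < g1) (hg2 : 0 < g2) :
    (2 * α / a) ^ α / ((σ * Real.sqrt (2 * π)) ^ (-(1 / α)) * (σ * Real.sqrt α)
        * Real.sqrt (2 * π) * Real.exp (σ ^ 2 / (2 * α * lam ^ 2)) * g1) ^ α
      * ((σ * Real.sqrt (2 * π)) ^ (-(1 / β)) * (2 * α / a)⁻¹ * (σ * Real.sqrt β)
        * Real.sqrt (2 * π) * Real.exp (σ ^ 2 * u ^ 2 / (2 * β)) * g2) ^ β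
    = (1 / (a * σ) * Real.sqrt (2 * α / π)) ^ α * (a ^ 2 * π * σ ^ 2 * β / (2 * α ^ 2)) ^ (β / 2)
      * Real.exp (σ ^ 2 / 2 * (u ^ 2 - 1 / lam ^ 2)) * g2 ^ β / g1 ^ α := by
  have hπ := Real.pi_pos
  have lm : ∀ x y : ℝ, 0 < x → 0 < y → Real.log (x * y) = Real.log x + Real.log y :=
    fun x y hx hy => Real.log_mul hx.ne' hy.ne'
  have ld : ∀ x y : ℝ, 0 < x → 0 < y → Real.log (x / y) = Real.log x - Real.log y :=
    fun x y hx hy => Real.log_div hx.ne' hy.ne'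
  have hA0 : (0:ℝ) < 2 * α / a := by positivity
  have hK : (0:ℝ) < σ * Real.sqrt (2 * π) := by positivity
  have hX1 : (0:ℝ) < (σ * Real.sqrt (2 * π)) ^ (-(1 / α)) * (σ * Real.sqrt α)
      * Real.sqrt (2 * π) * Real.exp (σ ^ 2 / (2 * α * lam ^ 2)) := by positivity
  have hX := mul_pos hX1 hg1
  have hY1 : (0:ℝ) < (σ * Real.sqrt (2 * π)) ^ (-(1 / β)) * (2 * α / a)⁻¹ * (σ * Real.sqrt β)
      * Real.sqrt (2 * π) * Real.exp (σ ^ 2 * u ^ 2 / (2 * β)) := by positivity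
  have hY := mul_pos hY1 hg2
  have hF1 : (0:ℝ) < 1 / (a * σ) * Real.sqrt (2 * α / π) := by positivity
  have hF2 : (0:ℝ) < a ^ 2 * π * σ ^ 2 * β / (2 * α ^ 2) := by positivity
  have hR2 : (0:ℝ) < (1 / (a * σ) * Real.sqrt (2 * α / π)) ^ α
      * (a ^ 2 * π * σ ^ 2 * β / (2 * α ^ 2)) ^ (β / 2)
      * Real.exp (σ ^ 2 / 2 * (u ^ 2 - 1 / lam ^ 2)) := by positivity
  have hL := mul_pos (div_pos (rpow_pos_of_pos hA0 α) (rpow_pos_of_pos hX α))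
    (rpow_pos_of_pos hY β)
  have hR := div_pos (mul_pos hR2 (rpow_pos_of_pos hg2 β)) (rpow_pos_of_pos hg1 α)
  -- expansions
  have e2π : Real.log (Real.sqrt (2 * π)) = (Real.log 2 + Real.log π) / 2 := by
    rw [Real.log_sqrt (by positivity), lm _ _ two_pos hπ]
  have eK : Real.log (σ * Real.sqrt (2 * π)) = Real.log σ + (Real.log 2 + Real.log π) / 2 := by
    rw [lm _ _ hσ (Real.sqrt_pos.2 (by positivity)), e2π]
  have eA : Real.log (2 * α / a) = Real.log 2 + Real.log α - Real.log a := by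
    rw [ld _ _ (by positivity) ha, lm _ _ two_pos hα]
  have eX : Real.log ((σ * Real.sqrt (2 * π)) ^ (-(1 / α)) * (σ * Real.sqrt α)
        * Real.sqrt (2 * π) * Real.exp (σ ^ 2 / (2 * α * lam ^ 2)))
      = -(1 / α) * (Real.log σ + (Real.log 2 + Real.log π) / 2)
        + (Real.log σ + Real.log α / 2) + (Real.log 2 + Real.log π) / 2
        + σ ^ 2 / (2 * α * lam ^ 2) := by
    rw [lm _ _ (by positivity) (Real.exp_pos _), lm _ _ (by positivity)
        (Real.sqrt_pos.2 (by positivity)),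
      lm _ _ (rpow_pos_of_pos hK _) (mul_pos hσ (Real.sqrt_pos.2 hα)),
      Real.log_rpow hK, eK, lm _ _ hσ (Real.sqrt_pos.2 hα), Real.log_sqrt hα.le,
      Real.log_exp, e2π]
  have eY : Real.log ((σ * Real.sqrt (2 * π)) ^ (-(1 / β)) * (2 * α / a)⁻¹ * (σ * Real.sqrt β)
        * Real.sqrt (2 * π) * Real.exp (σ ^ 2 * u ^ 2 / (2 * β)))
      = -(1 / β) * (Real.log σ + (Real.log 2 + Real.log π) / 2)
        - (Real.log 2 + Real.log α - Real.log a)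
        + (Real.log σ + Real.log β / 2) + (Real.log 2 + Real.log π) / 2
        + σ ^ 2 * u ^ 2 / (2 * β) := by
    rw [lm _ _ (by positivity) (Real.exp_pos _), lm _ _ (by positivity)
        (Real.sqrt_pos.2 (by positivity)),
      lm _ _ (mul_pos (rpow_pos_of_pos hK _) (inv_pos.2 hA0)) (mul_pos hσ (Real.sqrt_pos.2 hβ)),
      lm _ _ (rpow_pos_of_pos hK _) (inv_pos.2 hA0),
      Real.log_rpow hK, eK, Real.log_inv, eA,
      lm _ _ hσ (Real.sqrt_pos.2 hβ), Real.log_sqrt hβ.le, Real.log_exp, e2π]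
    ring
  have eR1 : Real.log (1 / (a * σ) * Real.sqrt (2 * α / π))
      = -(Real.log a + Real.log σ) + (Real.log 2 + Real.log α - Real.log π) / 2 := by
    rw [lm _ _ (by positivity) (Real.sqrt_pos.2 (by positivity)),
      ld _ _ one_pos (mul_pos ha hσ), Real.log_one, lm _ _ ha hσ,
      Real.log_sqrt (by positivity), ld _ _ (by positivity : (0:ℝ) < 2 * α) hπ,
      lm _ _ two_pos hα]
    ring
  have eR2 : Real.log (a ^ 2 * π * σ ^ 2 * β / (2 * α ^ 2))
      = 2 * Real.log a + Real.log π + 2 * Real.log σ + Real.log β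
        - (Real.log 2 + 2 * Real.log α) := by
    rw [ld _ _ (by positivity) (by positivity : (0:ℝ) < 2 * α ^ 2),
      lm _ _ (by positivity) hβ, lm _ _ (by positivity) (by positivity : (0:ℝ) < σ ^ 2),
      lm _ _ (by positivity : (0:ℝ) < a ^ 2) hπ,
      lm _ _ two_pos (by positivity : (0:ℝ) < α ^ 2),
      Real.log_pow, Real.log_pow, Real.log_pow]
    push_cast
    ring
  apply Real.log_injOn_pos (Set.mem_Ioi.2 hL) (Set.mem_Ioi.2 hR)
  rw [lm _ _ (div_pos (rpow_pos_of_pos hA0 α) (rpow_pos_of_pos hX α)) (rpow_pos_of_pos hY β),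
    ld _ _ (rpow_pos_of_pos hA0 α) (rpow_pos_of_pos hX α),
    Real.log_rpow hA0, Real.log_rpow hX, Real.log_rpow hY,
    ld _ _ (mul_pos hR2 (rpow_pos_of_pos hg2 β)) (rpow_pos_of_pos hg1 α),
    lm _ _ hR2 (rpow_pos_of_pos hg2 β),
    lm _ _ (mul_pos (rpow_pos_of_pos hF1 α) (rpow_pos_of_pos hF2 _)) (Real.exp_pos _),
    lm _ _ (rpow_pos_of_pos hF1 α) (rpow_pos_of_pos hF2 _),
    Real.log_rpow hF1, Real.log_rpow hF2, Real.log_exp,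
    Real.log_rpow hg1, Real.log_rpow hg2,
    lm _ _ hX1 hg1, lm _ _ hY1 hg2, eX, eY, eA, eR1, eR2]
  field_simp
  ring

/-- Gaussian `ϱ(x) = (σ√(2π))⁻¹e^{−x²/(2σ²)}`, exponential
`ψ(x) = e^{−|x|/λ}`, so `ω = ϱ/ψ`; quantizer `κ_a(x) = e^{−a|x|}`, `a > 0`;
`r ≥ 1`, `1 ≤ q < p ≤ ∞`, `α = r − 1/p + 1/q` and `β = 1/q − 1/p`.  Then
`FCTR(p,q,ω,κ_a) = (‖κ_a^{1/α}‖₁^α/‖ω^{1/α}‖₁^α)·E_p^q(ω,κ_a)`, with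
`E_p^q(ω,κ_a) = (∫_ℝ (κ_a^{1/α}/‖κ_a^{1/α}‖₁)(ω/κ_a)^{1/β})^β`, equals
`((1/(aσ))√(2α/π))^α (a²πσ²(α−r)/(2α²))^{(α−r)/2}
  exp((σ²/2)((ar/α + 1/λ)² − 1/λ²))
  [1 + erf(σ(ar/α + 1/λ)/√(2(α−r)))]^{α−r} / [1 + erf(σ/(λ√(2α)))]^α`. -/
theorem stmt_5 (σ lam a : ℝ) (hσ : 0 < σ) (hlam : 0 < lam) (ha : 0 < a)
    (r : ℕ) (hr : 0 < r) (p q : ℝ≥0∞) (hq1 : 1 ≤ q) (hqp : q < p)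
    (α β : ℝ) (hα : α = r - (1 / p).toReal + (1 / q).toReal)
    (hβ : β = (1 / q).toReal - (1 / p).toReal)
    (ω κ : ℝ → ℝ)
    (hω : ω = fun x : ℝ =>
      (σ * Real.sqrt (2 * π))⁻¹ * Real.exp (-x ^ 2 / (2 * σ ^ 2) + |x| / lam))
    (hκ : κ = fun x : ℝ => Real.exp (-(a * |x|))) :
    (∫ x : ℝ, κ x ^ (1 / α)) ^ α / (∫ x : ℝ, ω x ^ (1 / α)) ^ α
        * (∫ x : ℝ, κ x ^ (1 / α) / (∫ y : ℝ, κ y ^ (1 / α))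
            * (ω x / κ x) ^ (1 / β)) ^ β
      = (1 / (a * σ) * Real.sqrt (2 * α / π)) ^ α
          * (a ^ 2 * π * σ ^ 2 * (α - r) / (2 * α ^ 2)) ^ ((α - r) / 2)
          * Real.exp (σ ^ 2 / 2 * ((a * r / α + 1 / lam) ^ 2 - 1 / lam ^ 2))
          * (1 + erf (σ * (a * r / α + 1 / lam) / Real.sqrt (2 * (α - r)))) ^ (α - r)
          / (1 + erf (σ / (lam * Real.sqrt (2 * α)))) ^ α := by
  have hq0 : q ≠ 0 := (zero_lt_one.trans_le hq1).ne'
  have h1 : 1 / p < 1 / q := by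
    rw [one_div, one_div]
    exact ENNReal.inv_lt_inv.mpr hqp
  have hβpos : 0 < β := by
    rw [hβ, sub_pos]
    exact ENNReal.toReal_strict_mono (by simp [one_div, hq0]) h1
  have hαβ : α = (r : ℝ) + β := by rw [hα, hβ]; ring
  have hr1 : (1 : ℝ) ≤ (r : ℝ) := by exact_mod_cast hr
  have hαpos : 0 < α := by rw [hαβ]; linarith
  have hβα : β = α - (r : ℝ) := by rw [hαβ]; ring
  have hπ := Real.pi_pos
  -- integral A
  have hA : (∫ x : ℝ, κ x ^ (1 / α)) = 2 * α / a := by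
    simp only [hκ]
    have hpt : ∀ x : ℝ, Real.exp (-(a * |x|)) ^ (1 / α) = Real.exp (-(a / α * |x|)) := by
      intro x
      rw [← Real.exp_mul]
      congr 1
      field_simp
    simp only [hpt]
    rw [exp_abs_integral (div_pos ha hαpos)]
    field_simp
  -- integral B
  have hB : (∫ x : ℝ, ω x ^ (1 / α))
      = (σ * Real.sqrt (2 * π)) ^ (-(1 / α)) * (σ * Real.sqrt α) * Real.sqrt (2 * π)
        * Real.exp (σ ^ 2 / (2 * α * lam ^ 2))
        * (1 + erf (σ / (lam * Real.sqrt (2 * α)))) := by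
    simp only [hω]
    have hsq : (σ * Real.sqrt α) ^ 2 = σ ^ 2 * α := by
      rw [mul_pow, Real.sq_sqrt hαpos.le]
    have hpt : ∀ x : ℝ,
        ((σ * Real.sqrt (2 * π))⁻¹ * Real.exp (-x ^ 2 / (2 * σ ^ 2) + |x| / lam)) ^ (1 / α)
          = (σ * Real.sqrt (2 * π)) ^ (-(1 / α))
            * Real.exp (-x ^ 2 / (2 * (σ * Real.sqrt α) ^ 2) + 1 / (α * lam) * |x|) := by
      intro x
      rw [Real.mul_rpow (by positivity) (Real.exp_pos _).le,
        Real.inv_rpow (by positivity), ← Real.rpow_neg (by positivity), ← Real.exp_mul]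
      congr 1
      rw [hsq]
      field_simp
    simp only [hpt]
    rw [MeasureTheory.integral_const_mul,
      gauss_abs_integral (σ * Real.sqrt α) (1 / (α * lam)) (by positivity)]
    have hexp : (1 / (α * lam)) ^ 2 * (σ * Real.sqrt α) ^ 2 / 2 = σ ^ 2 / (2 * α * lam ^ 2) := by
      rw [hsq]; field_simp
    have herf : 1 / (α * lam) * (σ * Real.sqrt α) / Real.sqrt 2 = σ / (lam * Real.sqrt (2 * α)) := by
      rw [Real.sqrt_mul (by norm_num : (0:ℝ) ≤ 2) α]
      rw [div_eq_div_iff (by positivity) (by positivity)]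
      have h2 : Real.sqrt α * Real.sqrt α = α := Real.mul_self_sqrt hαpos.le
      field_simp
      linear_combination h2
    rw [hexp, herf]
    ring
  -- integral C
  have hC : (∫ x : ℝ, κ x ^ (1 / α) / (2 * α / a) * (ω x / κ x) ^ (1 / β))
      = (σ * Real.sqrt (2 * π)) ^ (-(1 / β)) * (2 * α / a)⁻¹ * (σ * Real.sqrt β)
        * Real.sqrt (2 * π) * Real.exp (σ ^ 2 * (a * r / α + 1 / lam) ^ 2 / (2 * β))
        * (1 + erf (σ * (a * r / α + 1 / lam) / Real.sqrt (2 * β))) := by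
    simp only [hκ, hω]
    have hsq : (σ * Real.sqrt β) ^ 2 = σ ^ 2 * β := by
      rw [mul_pow, Real.sq_sqrt hβpos.le]
    have hpt : ∀ x : ℝ,
        Real.exp (-(a * |x|)) ^ (1 / α) / (2 * α / a)
            * ((σ * Real.sqrt (2 * π))⁻¹ * Real.exp (-x ^ 2 / (2 * σ ^ 2) + |x| / lam)
              / Real.exp (-(a * |x|))) ^ (1 / β)
          = (σ * Real.sqrt (2 * π)) ^ (-(1 / β)) * (2 * α / a)⁻¹
            * Real.exp (-x ^ 2 / (2 * (σ * Real.sqrt β) ^ 2)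
              + (a * r / α + 1 / lam) / β * |x|) := by
      intro x
      have hT : -x ^ 2 / (2 * (σ * Real.sqrt β) ^ 2) + (a * r / α + 1 / lam) / β * |x|
          = -(a * |x|) * (1 / α)
            + (-x ^ 2 / (2 * σ ^ 2) + |x| / lam - -(a * |x|)) * (1 / β) := by
        rw [hsq, hαβ]
        field_simp
        ring
      rw [hT, Real.exp_add (-(a * |x|) * (1 / α))
          ((-x ^ 2 / (2 * σ ^ 2) + |x| / lam - -(a * |x|)) * (1 / β)),
        mul_div_assoc ((σ * Real.sqrt (2 * π))⁻¹), ← Real.exp_sub,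
        Real.mul_rpow (by positivity) (Real.exp_pos _).le,
        Real.inv_rpow (by positivity), ← Real.rpow_neg (by positivity),
        ← Real.exp_mul, ← Real.exp_mul]
      ring
    simp only [hpt]
    rw [MeasureTheory.integral_const_mul,
      gauss_abs_integral (σ * Real.sqrt β) ((a * r / α + 1 / lam) / β) (by positivity)]
    have hexp : ((a * r / α + 1 / lam) / β) ^ 2 * (σ * Real.sqrt β) ^ 2 / 2
        = σ ^ 2 * (a * r / α + 1 / lam) ^ 2 / (2 * β) := by
      rw [hsq]; field_simp
    have herf : (a * r / α + 1 / lam) / β * (σ * Real.sqrt β) / Real.sqrt 2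
        = σ * (a * r / α + 1 / lam) / Real.sqrt (2 * β) := by
      rw [Real.sqrt_mul (by norm_num : (0:ℝ) ≤ 2) β]
      rw [div_eq_div_iff (by positivity) (by positivity)]
      have h2 : Real.sqrt β ^ 2 = β := Real.sq_sqrt hβpos.le
      field_simp
      linear_combination h2
    rw [hexp, herf]
    ring
  rw [hA, hB, hC, ← hβα]
  exact final_alg a σ lam α β _ _ (a * r / α + 1 / lam) ha hσ hlam hαpos hβpos
    (one_add_erf_pos _) (one_add_erf_pos _)
end

section
/- Let D = ℝ, r = 1, p = ∞, q = 1 (so α = 2), ω(x) = (1/√(2π)) exp(−x²/2), and κ_σ(x) = (1/√(2πσ²)) exp(−x²/(2σ²)) for σ² > 0. Then FCTR(∞,1,ω,κ_σ) = (‖κ_σ^{1/2}‖_{L_1}² / ‖ω^{1/2}‖_{L_1}²) · ∫_ℝ (κ_σ(x)^{1/2}/‖κ_σ^{1/2}‖_{L_1}) · (ω(x)/κ_σ(x)) dx equals σ²/√(2σ²−1) if σ² > 1/2, while the integral ∫_ℝ κ_σ(x)^{1/2} (ω(x)/κ_σ(x)) dx diverges (equals +∞) if σ² ≤ 1/2.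 -/
open MeasureTheory Real Set
open scoped ENNReal

/-- With `r = 1`, `p = ∞`, `q = 1` (so `α = 2`), the standard Gaussian
`ω(x) = (1/√(2π)) e^{−x²/2}` and the Gaussian quantizer
`κ_σ(x) = (1/√(2πσ²)) e^{−x²/(2σ²)}` (parametrized below by `v = σ² > 0`):
`FCTR(∞,1,ω,κ_σ) = (‖κ_σ^{1/2}‖₁²/‖ω^{1/2}‖₁²) ∫_ℝ (κ_σ^{1/2}/‖κ_σ^{1/2}‖₁)(ω/κ_σ)`
equals `σ²/√(2σ²−1)` if `σ² > 1/2`, while `∫_ℝ κ_σ^{1/2}(ω/κ_σ)` diverges (is `+∞`)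
if `σ² ≤ 1/2`. -/
theorem stmt_9 (v : ℝ) (hv : 0 < v) (ω κ : ℝ → ℝ)
    (hω : ω = fun x : ℝ => (Real.sqrt (2 * π))⁻¹ * Real.exp (-x ^ 2 / 2))
    (hκ : κ = fun x : ℝ => (Real.sqrt (2 * π * v))⁻¹ * Real.exp (-x ^ 2 / (2 * v))) :
    (1 / 2 < v →
      (∫ x : ℝ, κ x ^ ((1:ℝ) / 2)) ^ 2 / (∫ x : ℝ, ω x ^ ((1:ℝ) / 2)) ^ 2
          * ∫ x : ℝ, κ x ^ ((1:ℝ) / 2) / (∫ y : ℝ, κ y ^ ((1:ℝ) / 2)) * (ω x / κ x)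
        = v / Real.sqrt (2 * v - 1))
    ∧ (v ≤ 1 / 2 →
        ∫⁻ x : ℝ, ENNReal.ofReal (κ x ^ ((1:ℝ) / 2) * (ω x / κ x)) = ⊤) := by
  subst hω hκ
  have hπ : (0:ℝ) < π := Real.pi_pos
  set a : ℝ := (Real.sqrt (2 * π * v))⁻¹ with ha
  set b : ℝ := (Real.sqrt (2 * π))⁻¹ with hb
  have hapos : 0 < a := by positivity
  have hbpos : 0 < b := by positivity
  -- pointwise: κ^{1/2}
  have ptκ : ∀ x : ℝ, (a * Real.exp (-x ^ 2 / (2 * v))) ^ ((1:ℝ)/2)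
      = a ^ ((1:ℝ)/2) * Real.exp (-(1/(4*v)) * x ^ 2) := by
    intro x
    rw [Real.mul_rpow hapos.le (Real.exp_pos _).le, ← Real.exp_mul]
    congr 1
    field_simp
    ring
  have ptω : ∀ x : ℝ, (b * Real.exp (-x ^ 2 / 2)) ^ ((1:ℝ)/2)
      = b ^ ((1:ℝ)/2) * Real.exp (-(1/4 : ℝ) * x ^ 2) := by
    intro x
    rw [Real.mul_rpow hbpos.le (Real.exp_pos _).le, ← Real.exp_mul]
    congr 1; ring
  have Iκ : (∫ x : ℝ, (a * Real.exp (-x ^ 2 / (2 * v))) ^ ((1:ℝ)/2))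
      = a ^ ((1:ℝ)/2) * Real.sqrt (4 * π * v) := by
    simp_rw [ptκ]
    rw [MeasureTheory.integral_const_mul, integral_gaussian]
    congr 1
    congr 1; field_simp
  have Iω : (∫ x : ℝ, (b * Real.exp (-x ^ 2 / 2)) ^ ((1:ℝ)/2))
      = b ^ ((1:ℝ)/2) * Real.sqrt (4 * π) := by
    simp_rw [ptω]
    rw [MeasureTheory.integral_const_mul, integral_gaussian]
    congr 1
    norm_num
    ring
  constructor
  · intro h
    have h2v : (0:ℝ) < 2 * v - 1 := by linarith
    set K : ℝ := a ^ ((1:ℝ)/2) * Real.sqrt (4 * π * v) with hK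
    have hKpos : 0 < K := by positivity
    have e1 : ∀ x : ℝ, Real.exp (-(1/(4*v)) * x ^ 2) * Real.exp (-x ^ 2 / 2)
        / Real.exp (-x ^ 2 / (2 * v)) = Real.exp (-((2*v-1)/(4*v)) * x ^ 2) := by
      intro x
      rw [← Real.exp_add, ← Real.exp_sub]
      congr 1
      field_simp
      ring
    have pt3 : ∀ x : ℝ, (a * Real.exp (-x ^ 2 / (2 * v))) ^ ((1:ℝ)/2) / K
        * ((b * Real.exp (-x ^ 2 / 2)) / (a * Real.exp (-x ^ 2 / (2 * v))))
        = (a ^ ((1:ℝ)/2) * b / (K * a)) * Real.exp (-((2*v-1)/(4*v)) * x ^ 2) := by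
      intro x
      rw [ptκ x, ← e1 x]
      have hE : Real.exp (-x ^ 2 / (2 * v)) ≠ 0 := (Real.exp_pos _).ne'
      field_simp
    have I3 : (∫ x : ℝ, (a * Real.exp (-x ^ 2 / (2 * v))) ^ ((1:ℝ)/2) / K
        * ((b * Real.exp (-x ^ 2 / 2)) / (a * Real.exp (-x ^ 2 / (2 * v)))))
        = (a ^ ((1:ℝ)/2) * b / (K * a)) * Real.sqrt (4 * π * v / (2*v-1)) := by
      simp_rw [pt3]
      rw [MeasureTheory.integral_const_mul, integral_gaussian]
      congr 1
      rw [div_div_eq_mul_div]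
      congr 1
      ring
    simp only [Iκ]
    rw [I3, Iω]
    have ha2 : (a ^ ((1:ℝ)/2)) ^ 2 = a := by
      rw [← Real.rpow_natCast (a ^ ((1:ℝ)/2)) 2, ← Real.rpow_mul hapos.le]
      norm_num
    have hb2 : (b ^ ((1:ℝ)/2)) ^ 2 = b := by
      rw [← Real.rpow_natCast (b ^ ((1:ℝ)/2)) 2, ← Real.rpow_mul hbpos.le]
      norm_num
    have hS2 : Real.sqrt (4 * π * v) ^ 2 = 4 * π * v := Real.sq_sqrt (by positivity)
    have hT2 : Real.sqrt (4 * π) ^ 2 = 4 * π := Real.sq_sqrt (by positivity)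
    have hSdiv : Real.sqrt (4 * π * v / (2*v-1))
        = Real.sqrt (4 * π * v) / Real.sqrt (2*v-1) := Real.sqrt_div (by positivity) _
    rw [hSdiv, hK]
    have hUpos : 0 < Real.sqrt (2*v-1) := Real.sqrt_pos.mpr h2v
    have hSpos : 0 < Real.sqrt (4 * π * v) := Real.sqrt_pos.mpr (by positivity)
    have hTpos : 0 < Real.sqrt (4 * π) := Real.sqrt_pos.mpr (by positivity)
    have hahpos : 0 < a ^ ((1:ℝ)/2) := Real.rpow_pos_of_pos hapos _
    have hbhpos : 0 < b ^ ((1:ℝ)/2) := Real.rpow_pos_of_pos hbpos _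
    generalize hSe : Real.sqrt (4 * π * v) = S at *
    generalize hTe : Real.sqrt (4 * π) = T at *
    generalize hUe : Real.sqrt (2*v-1) = U at *
    generalize hAe : a ^ ((1:ℝ)/2) = A at *
    generalize hBe : b ^ ((1:ℝ)/2) = B at *
    rw [mul_pow, mul_pow, ha2, hb2, hS2, hT2]
    field_simp
  · intro h
    have hc : (0:ℝ) < a ^ ((1:ℝ)/2) * b / a := by positivity
    have hle : ∀ x : ℝ, a ^ ((1:ℝ)/2) * b / a
        ≤ (a * Real.exp (-x ^ 2 / (2 * v))) ^ ((1:ℝ)/2)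
          * ((b * Real.exp (-x ^ 2 / 2)) / (a * Real.exp (-x ^ 2 / (2 * v)))) := by
      intro x
      have hE : Real.exp (-x ^ 2 / (2 * v)) ≠ 0 := (Real.exp_pos _).ne'
      have key : (a * Real.exp (-x ^ 2 / (2 * v))) ^ ((1:ℝ)/2)
          * ((b * Real.exp (-x ^ 2 / 2)) / (a * Real.exp (-x ^ 2 / (2 * v))))
          = (a ^ ((1:ℝ)/2) * b / a) * Real.exp (((1-2*v)/(4*v)) * x ^ 2) := by
        rw [ptκ x]
        have e2 : Real.exp (-(1/(4*v)) * x ^ 2) * Real.exp (-x ^ 2 / 2)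
            / Real.exp (-x ^ 2 / (2 * v)) = Real.exp (((1-2*v)/(4*v)) * x ^ 2) := by
          rw [← Real.exp_add, ← Real.exp_sub]
          congr 1
          field_simp
          ring
        rw [← e2]
        field_simp
      rw [key]
      have hexp : (1:ℝ) ≤ Real.exp (((1-2*v)/(4*v)) * x ^ 2) := by
        apply Real.one_le_exp
        have : (0:ℝ) ≤ (1-2*v)/(4*v) := by
          apply div_nonneg (by linarith) (by linarith)
        positivity
      nlinarith
    have hmono : ∫⁻ x : ℝ, ENNReal.ofReal (a ^ ((1:ℝ)/2) * b / a)
        ≤ ∫⁻ x : ℝ, ENNReal.ofReal ((a * Real.exp (-x ^ 2 / (2 * v))) ^ ((1:ℝ)/2)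
          * ((b * Real.exp (-x ^ 2 / 2)) / (a * Real.exp (-x ^ 2 / (2 * v))))) :=
      lintegral_mono fun x => ENNReal.ofReal_le_ofReal (hle x)
    rw [lintegral_const, Real.volume_univ,
      ENNReal.mul_top (ENNReal.ofReal_pos.mpr hc).ne'] at hmono
    exact top_le_iff.mp hmono
end

section
/- Let σ, λ > 0 with λ > σ, ω(x) = (σ√(2π))^{-1} exp(−(x²/2)(σ^{−2} − λ^{−2})) on ℝ, κ_a(x) = exp(−a|x|) with a > 0, r a positive integer, 1 ≤ q < p ≤ ∞, and α = r − 1/p + 1/q. Then FCTR(p,q,ω,κ_a) = (2α(σ^{−2}−λ^{−2})/(πa²))^{r/2} · ((α−r)/α)^{(α−r)/2} · exp(a²r²/(2α²(σ^{−2}−λ^{−2}))) · [1 + erf(ar/(α√(2(α−r)(σ^{−2}−λ^{−2}))))]^{α−r}. -/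
open MeasureTheory Real Set
open scoped ENNReal

lemma aux_abs {k : ℝ} (hk : 0 < k) : ∫ x : ℝ, Real.exp (-(k * |x|)) = 2 / k := by
  rw [integral_comp_abs (f := fun y => Real.exp (-(k * y)))]
  have h := integral_comp_mul_left_Ioi (fun y => Real.exp (-y)) 0 hk
  simp only [mul_zero, integral_exp_neg_Ioi_zero, smul_eq_mul, mul_one] at h
  rw [h]
  rw [eq_div_iff hk.ne']
  field_simp

lemma aux_erf {b m : ℝ} (hb : 0 < b) (hm : 0 < m) :
    ∫ x in Ioi (-m), Real.exp (-b * x ^ 2)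
      = Real.sqrt (π / b) / 2 * (1 + erf (Real.sqrt b * m)) := by
  have hint := integrable_exp_neg_mul_sq hb
  rw [← Ioc_union_Ioi_eq_Ioi (by linarith : -m ≤ (0:ℝ)),
    setIntegral_union Ioc_disjoint_Ioi_same measurableSet_Ioi hint.integrableOn
      hint.integrableOn, integral_gaussian_Ioi,
    ← intervalIntegral.integral_of_le (by linarith : -m ≤ (0:ℝ))]
  have h1 : (∫ x in (-m)..(0:ℝ), Real.exp (-b * x ^ 2))
      = ∫ x in (0:ℝ)..m, Real.exp (-b * x ^ 2) := by
    rw [show (0:ℝ) = -0 by norm_num, ← intervalIntegral.integral_comp_neg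
      (fun x => Real.exp (-b * x ^ 2))]
    simp [neg_sq]
  have h2 : (∫ x in (0:ℝ)..m, Real.exp (-b * x ^ 2))
      = (Real.sqrt b)⁻¹ * ∫ t in (0:ℝ)..(Real.sqrt b * m), Real.exp (-t ^ 2) := by
    have hsb : Real.sqrt b ≠ 0 := by positivity
    have : ∀ x : ℝ, Real.exp (-b * x ^ 2)
        = (fun t => Real.exp (-t ^ 2)) (Real.sqrt b * x) := by
      intro x
      simp only []
      congr 1
      rw [mul_pow, sq_sqrt hb.le]
      ring
    simp_rw [this]
    rw [intervalIntegral.integral_comp_mul_left (fun t => Real.exp (-t ^ 2)) hsb]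
    simp [smul_eq_mul]
  have hπb : Real.sqrt (π / b) = Real.sqrt π / Real.sqrt b := Real.sqrt_div pi_pos.le b
  have hπ0 : (0:ℝ) < Real.sqrt π := Real.sqrt_pos.mpr pi_pos
  have hb0 : (0:ℝ) < Real.sqrt b := Real.sqrt_pos.mpr hb
  rw [h1, h2]
  rw [erf, hπb]
  field_simp
  ring

lemma aux_shift {b m : ℝ} :
    ∫ x in Ioi (0:ℝ), Real.exp (-b * (x - m) ^ 2)
      = ∫ x in Ioi (-m), Real.exp (-b * x ^ 2) := by
  rw [← integral_indicator measurableSet_Ioi, ← integral_indicator measurableSet_Ioi,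
    ← integral_sub_right_eq_self
      (fun x => (Ioi (-m)).indicator (fun y => Real.exp (-b * y ^ 2)) x) m]
  congr 1
  funext x
  by_cases h : 0 < x
  · rw [Set.indicator_of_mem (mem_Ioi.mpr h),
      Set.indicator_of_mem (mem_Ioi.mpr (by linarith : -m < x - m))]
  · rw [Set.indicator_of_notMem (by simpa using h),
      Set.indicator_of_notMem (by simp only [mem_Ioi, not_lt] at h ⊢; linarith)]

lemma aux_main {b d : ℝ} (hb : 0 < b) (hd : 0 < d) :
    ∫ x : ℝ, Real.exp (-(b * x ^ 2) + d * |x|)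
      = Real.exp (d ^ 2 / (4 * b)) * Real.sqrt (π / b)
          * (1 + erf (d / (2 * Real.sqrt b))) := by
  rw [show (fun x : ℝ => Real.exp (-(b * x ^ 2) + d * |x|))
      = fun x : ℝ => (fun y => Real.exp (-(b * y ^ 2) + d * y)) |x| from
      funext fun x => by simp [sq_abs]]
  rw [integral_comp_abs (f := fun y => Real.exp (-(b * y ^ 2) + d * y))]
  have hm : 0 < d / (2 * b) := by positivity
  have key : ∀ x : ℝ, Real.exp (-(b * x ^ 2) + d * x)
      = Real.exp (d ^ 2 / (4 * b)) * Real.exp (-b * (x - d / (2 * b)) ^ 2) := by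
    intro x
    rw [← Real.exp_add]
    congr 1
    field_simp
    ring
  simp_rw [key]
  rw [MeasureTheory.integral_const_mul, aux_shift, aux_erf hb hm]
  have hsb : Real.sqrt b * (d / (2 * b)) = d / (2 * Real.sqrt b) := by
    have h1 : (0:ℝ) < Real.sqrt b := Real.sqrt_pos.mpr hb
    have hbb : Real.sqrt b * Real.sqrt b = b := Real.mul_self_sqrt hb.le
    rw [eq_div_iff (by positivity : (2 * Real.sqrt b) ≠ 0),
      show Real.sqrt b * (d / (2 * b)) * (2 * Real.sqrt b)
        = d * (Real.sqrt b * Real.sqrt b) / b by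
          field_simp, hbb]
    field_simp
  rw [hsb]
  ring

lemma final_alg_s12 (α β rr a c C E K : ℝ) (hα : 0 < α) (hβ : 0 < β) (ha : 0 < a)
    (hc : 0 < c) (hC : 0 < C) (hE : 0 ≤ E) (hrr : α = rr + β) (hrr0 : 0 < rr)
    (hK : K * β = a ^ 2 * rr ^ 2 / (2 * α ^ 2 * c)) :
    (2 * α / a) ^ α / (C ^ (1/α) * Real.sqrt (π / (c / (2 * α)))) ^ α
      * (a / (2 * α) * C ^ (1/β)
          * (Real.exp K * Real.sqrt (π / (c / (2 * β))) * E)) ^ β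
    = (2 * α * c / (π * a ^ 2)) ^ (rr / 2) * (β / α) ^ (β / 2)
        * Real.exp (a ^ 2 * rr ^ 2 / (2 * α ^ 2 * c)) * E ^ β := by
  have hπ : (0:ℝ) < π := pi_pos
  have hX : (0:ℝ) < π / (c / (2 * α)) := by positivity
  have hY : (0:ℝ) < π / (c / (2 * β)) := by positivity
  have hA : (0:ℝ) < 2 * α / a := by positivity
  set X := π / (c / (2 * α)) with hXdef
  set Y := π / (c / (2 * β)) with hYdef
  have h1 : (C ^ (1/α) * Real.sqrt X) ^ α = C * X ^ (α / 2) := by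
    rw [Real.mul_rpow (by positivity) (Real.sqrt_nonneg _), ← Real.rpow_mul hC.le,
      one_div_mul_cancel hα.ne', Real.rpow_one, Real.sqrt_eq_rpow,
      ← Real.rpow_mul hX.le, show (1:ℝ)/2 * α = α / 2 by ring]
  have h2 : (a / (2 * α) * C ^ (1/β) * (Real.exp K * Real.sqrt Y * E)) ^ β
      = (a / (2 * α)) ^ β * C * (Real.exp (K * β) * (Y ^ (β / 2) * E ^ β)) := by
    rw [Real.mul_rpow (by positivity) (by positivity),
      Real.mul_rpow (by positivity) (by positivity),
      Real.mul_rpow (by positivity) hE,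
      Real.mul_rpow (Real.exp_pos _).le (Real.sqrt_nonneg _),
      ← Real.rpow_mul hC.le, one_div_mul_cancel hβ.ne', Real.rpow_one,
      ← Real.exp_mul, Real.sqrt_eq_rpow, ← Real.rpow_mul hY.le,
      show (1:ℝ)/2 * β = β / 2 by ring]
    ring
  rw [h1, h2, hK]
  have key : (2 * α / a) ^ α * (a / (2 * α)) ^ β * Y ^ (β / 2) / X ^ (α / 2)
      = (2 * α * c / (π * a ^ 2)) ^ (rr / 2) * (β / α) ^ (β / 2) := by
    have k1 : a / (2 * α) = (2 * α / a)⁻¹ := by rw [inv_div]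
    have k2 : (2 * α / a) ^ α * ((2 * α / a)⁻¹) ^ β = (2 * α / a) ^ rr := by
      rw [Real.inv_rpow hA.le, ← Real.rpow_neg hA.le, ← Real.rpow_add hA,
        show α + -β = rr by linarith]
    have k3 : Y = X * (β / α) := by
      rw [hXdef, hYdef]; field_simp
    have k4 : X ^ (β / 2) / X ^ (α / 2) = (X ^ (rr / 2))⁻¹ := by
      rw [div_eq_mul_inv, ← Real.rpow_neg hX.le, ← Real.rpow_add hX,
        show β / 2 + -(α / 2) = -(rr / 2) by linarith, Real.rpow_neg hX.le]
    have k5 : (2 * α / a) ^ rr * (X ^ (rr / 2))⁻¹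
        = (2 * α * c / (π * a ^ 2)) ^ (rr / 2) := by
      rw [← Real.inv_rpow hX.le,
        show (2 * α / a) ^ rr = ((2 * α / a) ^ (2:ℕ)) ^ (rr / 2) by
          rw [← Real.rpow_natCast (2 * α / a) 2, ← Real.rpow_mul hA.le]
          congr 1
          ring,
        ← Real.mul_rpow (by positivity) (by positivity)]
      congr 1
      rw [hXdef]
      field_simp
    rw [k1, k3, Real.mul_rpow hX.le (by positivity)]
    calc (2 * α / a) ^ α * ((2 * α / a)⁻¹) ^ β * (X ^ (β / 2) * (β / α) ^ (β / 2))
          / X ^ (α / 2)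
        = (2 * α / a) ^ α * ((2 * α / a)⁻¹) ^ β * (X ^ (β / 2) / X ^ (α / 2))
          * (β / α) ^ (β / 2) := by ring
      _ = (2 * α / a) ^ rr * (X ^ (rr / 2))⁻¹ * (β / α) ^ (β / 2) := by
          rw [k2, k4]
      _ = _ := by rw [k5]
  calc (2 * α / a) ^ α / (C * X ^ (α / 2))
        * ((a / (2 * α)) ^ β * C
          * (Real.exp (a ^ 2 * rr ^ 2 / (2 * α ^ 2 * c)) * (Y ^ (β / 2) * E ^ β)))
      = ((2 * α / a) ^ α * (a / (2 * α)) ^ β * Y ^ (β / 2) / X ^ (α / 2))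
        * Real.exp (a ^ 2 * rr ^ 2 / (2 * α ^ 2 * c)) * E ^ β := by
        field_simp
    _ = _ := by rw [key]

/-- Gaussian weights `ϱ(x) = (σ√(2π))⁻¹e^{−x²/(2σ²)}`,
`ψ(x) = e^{−x²/(2λ²)}` with `λ > σ > 0`, so
`ω(x) = (σ√(2π))⁻¹exp(−(x²/2)(σ⁻² − λ⁻²))`; quantizer `κ_a(x) = e^{−a|x|}`, `a > 0`;
`r ≥ 1`, `1 ≤ q < p ≤ ∞`, `α = r − 1/p + 1/q`, `β = 1/q − 1/p`.  Then
`FCTR(p,q,ω,κ_a) = (‖κ_a^{1/α}‖₁^α/‖ω^{1/α}‖₁^α)·(∫_ℝ (κ_a^{1/α}/‖κ_a^{1/α}‖₁)(ω/κ_a)^{1/β})^β`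
equals `(2α(σ⁻²−λ⁻²)/(πa²))^{r/2}((α−r)/α)^{(α−r)/2} exp(a²r²/(2α²(σ⁻²−λ⁻²)))
[1 + erf(ar/(α√(2(α−r)(σ⁻²−λ⁻²))))]^{α−r}`. -/
theorem stmt_12 (σ lam a : ℝ) (hσ : 0 < σ) (hlam : 0 < lam) (hσlam : σ < lam)
    (ha : 0 < a) (r : ℕ) (hr : 0 < r) (p q : ℝ≥0∞) (hq1 : 1 ≤ q) (hqp : q < p)
    (α β : ℝ) (hα : α = r - (1 / p).toReal + (1 / q).toReal)
    (hβ : β = (1 / q).toReal - (1 / p).toReal)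
    (ω κ : ℝ → ℝ)
    (hω : ω = fun x : ℝ =>
      (σ * Real.sqrt (2 * π))⁻¹ * Real.exp (-(x ^ 2 / 2) * ((σ ^ 2)⁻¹ - (lam ^ 2)⁻¹)))
    (hκ : κ = fun x : ℝ => Real.exp (-(a * |x|))) :
    (∫ x : ℝ, κ x ^ (1 / α)) ^ α / (∫ x : ℝ, ω x ^ (1 / α)) ^ α
        * (∫ x : ℝ, κ x ^ (1 / α) / (∫ y : ℝ, κ y ^ (1 / α))
            * (ω x / κ x) ^ (1 / β)) ^ β
      = (2 * α * ((σ ^ 2)⁻¹ - (lam ^ 2)⁻¹) / (π * a ^ 2)) ^ ((r : ℝ) / 2)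
          * ((α - r) / α) ^ ((α - r) / 2)
          * Real.exp (a ^ 2 * r ^ 2 / (2 * α ^ 2 * ((σ ^ 2)⁻¹ - (lam ^ 2)⁻¹)))
          * (1 + erf (a * r
              / (α * Real.sqrt (2 * (α - r) * ((σ ^ 2)⁻¹ - (lam ^ 2)⁻¹))))) ^ (α - r) := by
  -- basic positivity
  have hq0 : q ≠ 0 := by
    rintro rfl
    simp at hq1
  have hp0 : p ≠ 0 := by
    rintro rfl
    exact (not_lt_of_ge (zero_le : 0 ≤ q)) hqp
  have hβ0 : 0 < β := by
    rw [hβ, sub_pos]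
    rw [ENNReal.toReal_lt_toReal (by simp [hp0]) (by simp [hq0])]
    simp only [one_div]
    exact ENNReal.inv_lt_inv.mpr hqp
  have hr0 : (0:ℝ) < (r:ℝ) := by exact_mod_cast hr
  have hαβ : α = (r:ℝ) + β := by rw [hα, hβ]; ring
  have hα0 : 0 < α := by linarith
  have hαr : α - (r:ℝ) = β := by linarith
  simp only [hω, hκ]
  set c : ℝ := (σ ^ 2)⁻¹ - (lam ^ 2)⁻¹ with hcdef
  have hc : 0 < c := by
    rw [hcdef, sub_pos]
    apply inv_strictAnti₀ (by positivity)
    nlinarith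
  set C : ℝ := (σ * Real.sqrt (2 * π))⁻¹ with hCdef
  have hsq : (0:ℝ) < Real.sqrt (2 * π) := Real.sqrt_pos.mpr (by positivity)
  have hC : 0 < C := by rw [hCdef]; positivity
  -- integral of κ^(1/α)
  have hI1 : (∫ x : ℝ, Real.exp (-(a * |x|)) ^ (1 / α)) = 2 * α / a := by
    rw [show (fun x : ℝ => Real.exp (-(a * |x|)) ^ (1 / α))
        = fun x : ℝ => Real.exp (-(a / α * |x|)) from funext fun x => by
          rw [← Real.exp_mul]
          congr 1
          field_simp]
    rw [aux_abs (by positivity : 0 < a / α)]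
    field_simp
  -- integral of ω^(1/α)
  have hI2 : (∫ x : ℝ, (C * Real.exp (-(x ^ 2 / 2) * c)) ^ (1 / α))
      = C ^ (1 / α) * Real.sqrt (π / (c / (2 * α))) := by
    rw [show (fun x : ℝ => (C * Real.exp (-(x ^ 2 / 2) * c)) ^ (1 / α))
        = fun x : ℝ => C ^ (1 / α) * Real.exp (-(c / (2 * α)) * x ^ 2) from
        funext fun x => by
          rw [Real.mul_rpow hC.le (Real.exp_pos _).le, ← Real.exp_mul]
          congr 2
          field_simp]
    rw [MeasureTheory.integral_const_mul, integral_gaussian]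
  -- the inner integral
  have hd0 : 0 < a * (r:ℝ) / (α * β) := by positivity
  have hb0 : 0 < c / (2 * β) := by positivity
  have hinner : (∫ x : ℝ, Real.exp (-(a * |x|)) ^ (1 / α) / (2 * α / a)
        * (C * Real.exp (-(x ^ 2 / 2) * c) / Real.exp (-(a * |x|))) ^ (1 / β))
      = a / (2 * α) * C ^ (1 / β)
        * (Real.exp ((a * (r:ℝ) / (α * β)) ^ 2 / (4 * (c / (2 * β))))
          * Real.sqrt (π / (c / (2 * β)))
          * (1 + erf (a * (r:ℝ) / (α * β) / (2 * Real.sqrt (c / (2 * β)))))) := by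
    rw [show (fun x : ℝ => Real.exp (-(a * |x|)) ^ (1 / α) / (2 * α / a)
          * (C * Real.exp (-(x ^ 2 / 2) * c) / Real.exp (-(a * |x|))) ^ (1 / β))
        = fun x : ℝ => a / (2 * α) * C ^ (1 / β)
          * Real.exp (-(c / (2 * β) * x ^ 2) + a * (r:ℝ) / (α * β) * |x|) from
        funext fun x => by
          rw [mul_div_assoc (a := C), ← Real.exp_sub,
            Real.mul_rpow hC.le (Real.exp_pos _).le, ← Real.exp_mul, ← Real.exp_mul]
          rw [div_eq_mul_inv _ (2 * α / a), inv_div]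
          rw [show Real.exp (-(a * |x|) * (1 / α)) * (a / (2 * α))
              * (C ^ (1 / β) * Real.exp ((-(x ^ 2 / 2) * c - -(a * |x|)) * (1 / β)))
              = a / (2 * α) * C ^ (1 / β)
                * (Real.exp (-(a * |x|) * (1 / α))
                  * Real.exp ((-(x ^ 2 / 2) * c - -(a * |x|)) * (1 / β))) by ring,
            ← Real.exp_add]
          congr 2
          rw [show (r:ℝ) = α - β by linarith]
          field_simp
          ring]
    rw [MeasureTheory.integral_const_mul, aux_main hb0 hd0]
  rw [hI1, hI2, hinner]
  -- rewrite α - r to β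
  rw [hαr]
  -- match the erf argument
  have ht : Real.sqrt (2 * β * c) = 2 * β * Real.sqrt (c / (2 * β)) := by
    rw [show 2 * β * c = (2 * β) ^ 2 * (c / (2 * β)) by field_simp,
      Real.sqrt_mul (sq_nonneg _), Real.sqrt_sq (by positivity)]
  have hz : a * (r:ℝ) / (α * β) / (2 * Real.sqrt (c / (2 * β)))
      = a * (r:ℝ) / (α * Real.sqrt (2 * β * c)) := by
    have hs : 0 < Real.sqrt (c / (2 * β)) := Real.sqrt_pos.mpr hb0
    rw [ht]
    field_simp
  rw [← hz]
  -- apply the algebra lemma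
  have hE : 0 ≤ 1 + erf (a * (r:ℝ) / (α * β) / (2 * Real.sqrt (c / (2 * β)))) := by
    have hz0 : 0 ≤ a * (r:ℝ) / (α * β) / (2 * Real.sqrt (c / (2 * β))) := by positivity
    have : 0 ≤ erf (a * (r:ℝ) / (α * β) / (2 * Real.sqrt (c / (2 * β)))) := by
      rw [erf]
      apply mul_nonneg (by positivity)
      exact intervalIntegral.integral_nonneg hz0 fun x _ => (Real.exp_pos _).le
    linarith
  have hK : (a * (r:ℝ) / (α * β)) ^ 2 / (4 * (c / (2 * β))) * β
      = a ^ 2 * (r:ℝ) ^ 2 / (2 * α ^ 2 * c) := by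
    field_simp
    ring
  exact final_alg_s12 α β (r:ℝ) a c C _ _ hα0 hβ0 ha hc hC hE hαβ hr0 hK
end

section
/- Let D = [0,∞), μ ∈ ℝ, σ > 0, and let ω(x) = (x σ√(2π))^{-1} exp(−(ln x − μ)²/(2σ²)) for x > 0 be the log-normal density. For c > 0 let κ_c(x) = 1 for x ∈ [0, e^μ] and κ_c(x) = exp(c(μ − ln x)) for x > e^μ. Then: (i) for c > α one has ‖κ_c^{1/α}‖_{L_1(D)}^α = (c/(c−α))^α e^{αμ}; and (ii) ‖ω/κ_c‖_{L_∞(D)} = (σ√(2π))^{-1} exp(−μ + (σ²/2)·max(1, (c−1)²)). -/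
open MeasureTheory Real Set
open scoped ENNReal

set_option maxHeartbeats 1000000 in
/-- Log-normal `ω` on `D = [0,∞)` and the quantizer
`κ_c(x) = 1` for `x ∈ [0, e^μ]`, `κ_c(x) = exp(c(μ − ln x))` for `x > e^μ`.
(i) For `c > α`: `‖κ_c^{1/α}‖_{L₁(D)}^α = (c/(c−α))^α e^{αμ}`.
(ii) `‖ω/κ_c‖_{L_∞(D)} = (σ√(2π))⁻¹ exp(−μ + (σ²/2) max(1,(c−1)²))`. -/
theorem stmt_15 (μ σ : ℝ) (hσ : 0 < σ) (α : ℝ) (hα : 0 < α) (c : ℝ) (hc : 0 < c)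
    (ω κ : ℝ → ℝ)
    (hω : ω = fun x : ℝ =>
      (x * σ * Real.sqrt (2 * π))⁻¹ * Real.exp (-(Real.log x - μ) ^ 2 / (2 * σ ^ 2)))
    (hκ : κ = fun x : ℝ =>
      if x ≤ Real.exp μ then 1 else Real.exp (c * (μ - Real.log x))) :
    (α < c →
      (∫ x in Set.Ioi (0:ℝ), κ x ^ (1 / α)) ^ α = (c / (c - α)) ^ α * Real.exp (α * μ))
    ∧ eLpNorm (fun x => ω x / κ x) ⊤ (volume.restrict (Set.Ioi (0:ℝ)))
        = ENNReal.ofReal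
            ((σ * Real.sqrt (2 * π))⁻¹
              * Real.exp (-μ + σ ^ 2 / 2 * max 1 ((c - 1) ^ 2))) := by
  constructor
  · intro hac
    subst hκ
    set m := Real.exp μ with hmdef
    have hm0 : (0:ℝ) < m := Real.exp_pos μ
    have hca : 0 < c - α := by linarith
    have hp : (1:ℝ) < c / α := (one_lt_div hα).2 hac
    have hpa : -(c / α) < -1 := by linarith
    -- congruence on the right piece
    have hcongr2 : EqOn
        (fun x : ℝ => (if x ≤ m then (1:ℝ) else Real.exp (c * (μ - Real.log x))) ^ (1 / α))
        (fun x : ℝ => Real.exp (c * μ / α) * x ^ (-(c / α))) (Ioi m) := by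
      intro x hx
      have hx0 : (0:ℝ) < x := hm0.trans hx
      simp only [if_neg (not_le.2 (show m < x from hx))]
      rw [← Real.exp_mul, Real.rpow_def_of_pos hx0, ← Real.exp_add]
      congr 1
      field_simp
      ring
    have hcongr1 : EqOn
        (fun x : ℝ => (if x ≤ m then (1:ℝ) else Real.exp (c * (μ - Real.log x))) ^ (1 / α))
        (fun _ : ℝ => (1:ℝ)) (Ioc 0 m) := by
      intro x hx
      simp only [if_pos hx.2, Real.one_rpow]
    have hint1 : IntegrableOn
        (fun x : ℝ => (if x ≤ m then (1:ℝ) else Real.exp (c * (μ - Real.log x))) ^ (1 / α))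
        (Ioc 0 m) := by
      apply IntegrableOn.congr_fun ?_ hcongr1.symm measurableSet_Ioc
      refine integrableOn_const ?_
      simp [Real.volume_Ioc]
    have hint2 : IntegrableOn
        (fun x : ℝ => (if x ≤ m then (1:ℝ) else Real.exp (c * (μ - Real.log x))) ^ (1 / α))
        (Ioi m) := by
      apply IntegrableOn.congr_fun ?_ hcongr2.symm measurableSet_Ioi
      exact (integrableOn_Ioi_rpow_of_lt hpa hm0).const_mul _
    have hsplit : Ioi (0:ℝ) = Ioc 0 m ∪ Ioi m := (Ioc_union_Ioi_eq_Ioi hm0.le).symm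
    rw [hsplit, setIntegral_union (Ioc_disjoint_Ioi le_rfl) measurableSet_Ioi hint1 hint2,
      setIntegral_congr_fun measurableSet_Ioc hcongr1,
      setIntegral_congr_fun measurableSet_Ioi hcongr2]
    rw [MeasureTheory.integral_const_mul, integral_Ioi_rpow_of_lt hpa hm0]
    have hmrw : m ^ (-(c / α) + 1) = Real.exp (μ * (-(c / α) + 1)) := by
      rw [hmdef, ← Real.exp_mul]
    rw [hmrw]
    have hconst : ∫ x in Ioc (0:ℝ) m, (1:ℝ) = m := by
      simp [Real.volume_Ioc, hm0.le]
    rw [hconst]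
    have hne : -(c / α) + 1 ≠ 0 := by
      have : c / α ≠ 1 := ne_of_gt hp
      intro h; apply this; linarith
    have hkey : m + Real.exp (c * μ / α) * (-Real.exp (μ * (-(c / α) + 1)) / (-(c / α) + 1))
        = m * (c / (c - α)) := by
      have h1 : Real.exp (c * μ / α) * Real.exp (μ * (-(c / α) + 1)) = m := by
        rw [← Real.exp_add, hmdef]
        congr 1
        field_simp
        ring
      have h2 : Real.exp (c * μ / α) * (-Real.exp (μ * (-(c / α) + 1)) / (-(c / α) + 1))
          = m * (-1 / (-(c / α) + 1)) := by
        rw [← h1]; ring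
      rw [h2]
      have h3 : -1 / (-(c / α) + 1) = α / (c - α) := by
        rw [div_eq_div_iff ?_ (ne_of_gt hca)]
        · field_simp
          ring
        · intro h; exact hne h
      rw [h3]
      have : 1 + α / (c - α) = c / (c - α) := by field_simp; ring
      rw [← this]; ring
    rw [hkey]
    rw [Real.mul_rpow hm0.le (by positivity), hmdef, ← Real.exp_mul, mul_comm μ α, mul_comm]
  · set s : ℝ := Real.sqrt (2 * π) with hsdef
    have hs0 : (0:ℝ) < s := Real.sqrt_pos.2 (by positivity)
    set V : ℝ := max 1 ((c - 1) ^ 2) with hVdef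
    set M : ℝ := (σ * s)⁻¹ * Real.exp (-μ + σ ^ 2 / 2 * V) with hMdef
    have hM0 : (0:ℝ) < M := by positivity
    have hV1 : (1:ℝ) ≤ V := le_max_left _ _
    have hVc : (c - 1) ^ 2 ≤ V := le_max_right _ _
    have h2σ : (0:ℝ) < 2 * σ ^ 2 := by positivity
    set F : ℝ → ℝ := fun x => ω x / κ x with hFdef
    have hxinv : ∀ x : ℝ, 0 < x → (x * σ * s)⁻¹ = (σ * s)⁻¹ * Real.exp (-Real.log x) := by
      intro x hx
      rw [Real.exp_neg, Real.exp_log hx, mul_inv, mul_inv, mul_inv]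
      ring
    have hval1 : ∀ x : ℝ, 0 < x → x ≤ Real.exp μ →
        F x = (σ * s)⁻¹ *
          Real.exp (-Real.log x - (Real.log x - μ) ^ 2 / (2 * σ ^ 2)) := by
      intro x hx hxm
      simp only [hFdef, hω, hκ, if_pos hxm, div_one, hxinv x hx]
      rw [mul_assoc, ← Real.exp_add]
      congr 1
      ring
    have hval2 : ∀ x : ℝ, 0 < x → ¬ x ≤ Real.exp μ →
        F x = (σ * s)⁻¹ *
          Real.exp (-Real.log x - (Real.log x - μ) ^ 2 / (2 * σ ^ 2)
            - c * (μ - Real.log x)) := by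
      intro x hx hxm
      simp only [hFdef, hω, hκ, if_neg hxm, hxinv x hx]
      rw [div_eq_mul_inv, ← Real.exp_neg, mul_assoc, ← Real.exp_add, mul_assoc, ← Real.exp_add]
      congr 1
      ring
    rw [eLpNorm_exponent_top]
    apply le_antisymm
    · apply eLpNormEssSup_le_of_ae_bound (C := M)
      rw [ae_restrict_iff' measurableSet_Ioi]
      refine Filter.Eventually.of_forall (fun x hx => ?_)
      have hx0 : (0:ℝ) < x := hx
      have hdiv : (Real.log x - μ) ^ 2 / (2 * σ ^ 2) * (2 * σ ^ 2) = (Real.log x - μ) ^ 2 :=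
        div_mul_cancel₀ _ h2σ.ne'
      by_cases h : x ≤ Real.exp μ
      · rw [hval1 x hx0 h, Real.norm_eq_abs, abs_of_nonneg (by positivity), hMdef]
        refine mul_le_mul_of_nonneg_left ?_ (by positivity)
        rw [Real.exp_le_exp]
        have hstep : -Real.log x - (Real.log x - μ) ^ 2 / (2 * σ ^ 2) ≤ -μ + σ ^ 2 / 2 := by
          nlinarith [sq_nonneg (Real.log x - μ + σ ^ 2), hdiv, h2σ]
        have hstep2 : σ ^ 2 / 2 ≤ σ ^ 2 / 2 * V := by nlinarith [hV1, sq_nonneg σ]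
        linarith
      · rw [hval2 x hx0 h, Real.norm_eq_abs, abs_of_nonneg (by positivity), hMdef]
        refine mul_le_mul_of_nonneg_left ?_ (by positivity)
        rw [Real.exp_le_exp]
        have hstep : -Real.log x - (Real.log x - μ) ^ 2 / (2 * σ ^ 2) - c * (μ - Real.log x)
            ≤ -μ + σ ^ 2 / 2 * (c - 1) ^ 2 := by
          nlinarith [sq_nonneg (Real.log x - μ - (c - 1) * σ ^ 2), hdiv, h2σ]
        have hstep2 : σ ^ 2 / 2 * (c - 1) ^ 2 ≤ σ ^ 2 / 2 * V := by
          nlinarith [hVc, sq_nonneg σ]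
        linarith
    · by_contra hlt
      push_neg at hlt
      obtain ⟨q, hq1, hq2⟩ := exists_between hlt
      have hqt : q ≠ ⊤ := (hq2.trans ENNReal.ofReal_lt_top).ne
      set b := q.toReal with hbdef
      have hb0 : (0:ℝ) ≤ b := ENNReal.toReal_nonneg
      have hbM : b < M := (ENNReal.lt_ofReal_iff_toReal_lt hqt).1 hq2
      have hqb : ENNReal.ofReal b = q := ENNReal.ofReal_toReal hqt
      have hexists : ∃ x₀ : ℝ, 0 < x₀ ∧ F x₀ = M ∧ ContinuousAt F x₀ := by
        rcases le_or_gt ((c - 1) ^ 2) 1 with h1 | h1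
        · refine ⟨Real.exp (μ - σ ^ 2), Real.exp_pos _, ?_, ?_⟩
          · have hlt' : Real.exp (μ - σ ^ 2) ≤ Real.exp μ :=
              Real.exp_le_exp.2 (by nlinarith [sq_nonneg σ])
            rw [hval1 _ (Real.exp_pos _) hlt', hMdef]
            congr 1
            rw [Real.log_exp, hVdef, max_eq_left h1]
            congr 1
            field_simp
            ring
          · have hlt' : Real.exp (μ - σ ^ 2) < Real.exp μ :=
              Real.exp_lt_exp.2 (by nlinarith [pow_pos hσ 2])
            have hx0' : (0:ℝ) < Real.exp (μ - σ ^ 2) := Real.exp_pos _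
            have hev : ∀ᶠ x in nhds (Real.exp (μ - σ ^ 2)),
                (fun y : ℝ => (y * σ * s)⁻¹ *
                  Real.exp (-(Real.log y - μ) ^ 2 / (2 * σ ^ 2))) x = F x := by
              filter_upwards [Ioo_mem_nhds hx0' hlt'] with x hx
              simp only [hFdef, hω, hκ, if_pos hx.2.le, div_one]
            have hgc : ContinuousAt (fun y : ℝ => (y * σ * s)⁻¹ *
                Real.exp (-(Real.log y - μ) ^ 2 / (2 * σ ^ 2))) (Real.exp (μ - σ ^ 2)) := by
              refine ContinuousAt.mul ?_ ?_
              · exact ((continuousAt_id.mul continuousAt_const).mul continuousAt_const).inv₀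
                  (mul_ne_zero (mul_ne_zero (Real.exp_pos _).ne' hσ.ne') hs0.ne')
              · exact Real.continuous_exp.continuousAt.comp
                  ((((Real.continuousAt_log hx0'.ne').sub continuousAt_const).pow 2).neg.div_const _)
            exact hgc.congr hev
        · have hc2 : (2:ℝ) < c := by nlinarith [sq_nonneg (c - 1), sq_nonneg (c + 1)]
          have hgt : Real.exp μ < Real.exp (μ + (c - 1) * σ ^ 2) :=
            Real.exp_lt_exp.2 (by nlinarith [pow_pos hσ 2])
          have hx0' : (0:ℝ) < Real.exp (μ + (c - 1) * σ ^ 2) := Real.exp_pos _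
          refine ⟨Real.exp (μ + (c - 1) * σ ^ 2), hx0', ?_, ?_⟩
          · rw [hval2 _ hx0' (not_le.2 hgt), hMdef]
            congr 1
            rw [Real.log_exp, hVdef, max_eq_right h1.le]
            congr 1
            field_simp
            ring
          · have hev : ∀ᶠ x in nhds (Real.exp (μ + (c - 1) * σ ^ 2)),
                (fun y : ℝ => ((y * σ * s)⁻¹ *
                  Real.exp (-(Real.log y - μ) ^ 2 / (2 * σ ^ 2))) /
                    Real.exp (c * (μ - Real.log y))) x = F x := by
              filter_upwards [Ioi_mem_nhds hgt] with x hx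
              simp only [hFdef, hω, hκ, if_neg (not_le.2 (show Real.exp μ < x from hx))]
            have hgc : ContinuousAt (fun y : ℝ => ((y * σ * s)⁻¹ *
                Real.exp (-(Real.log y - μ) ^ 2 / (2 * σ ^ 2))) /
                  Real.exp (c * (μ - Real.log y))) (Real.exp (μ + (c - 1) * σ ^ 2)) := by
              refine ContinuousAt.div (ContinuousAt.mul ?_ ?_) ?_ (Real.exp_ne_zero _)
              · exact ((continuousAt_id.mul continuousAt_const).mul continuousAt_const).inv₀
                  (mul_ne_zero (mul_ne_zero (Real.exp_pos _).ne' hσ.ne') hs0.ne')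
              · exact Real.continuous_exp.continuousAt.comp
                  ((((Real.continuousAt_log hx0'.ne').sub continuousAt_const).pow 2).neg.div_const _)
              · exact Real.continuous_exp.continuousAt.comp
                  (continuousAt_const.mul (continuousAt_const.sub
                    (Real.continuousAt_log hx0'.ne')))
            exact hgc.congr hev
      obtain ⟨x₀, hx₀, hFx₀, hFc⟩ := hexists
      have hE : {x : ℝ | b < F x} ∩ Ioi 0 ∈ nhds x₀ := by
        refine Filter.inter_mem ?_ (Ioi_mem_nhds hx₀)
        exact hFc (Ioi_mem_nhds (show b < F x₀ by rw [hFx₀]; exact hbM))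
      have hpos : 0 < volume ({x : ℝ | b < F x} ∩ Ioi 0) := by
        have hint : x₀ ∈ interior ({x : ℝ | b < F x} ∩ Ioi 0) :=
          mem_interior_iff_mem_nhds.2 hE
        calc (0:ℝ≥0∞) < volume (interior ({x : ℝ | b < F x} ∩ Ioi 0)) :=
              isOpen_interior.measure_pos volume ⟨x₀, hint⟩
          _ ≤ volume ({x : ℝ | b < F x} ∩ Ioi 0) := measure_mono interior_subset
      have hae := enorm_ae_le_eLpNormEssSup F (volume.restrict (Ioi (0:ℝ)))
      rw [Filter.eventually_iff, mem_ae_iff] at hae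
      have hsub : {x : ℝ | b < F x} ∩ Ioi 0 ⊆
          {x : ℝ | ‖F x‖ₑ ≤ eLpNormEssSup F (volume.restrict (Ioi (0:ℝ)))}ᶜ := by
        rintro x ⟨hbx, hx0⟩
        simp only [mem_compl_iff, mem_setOf_eq, not_le]
        have hfx : (0:ℝ) < F x := lt_of_le_of_lt hb0 hbx
        rw [Real.enorm_eq_ofReal hfx.le]
        calc eLpNormEssSup F (volume.restrict (Ioi (0:ℝ))) < q := hq1
          _ = ENNReal.ofReal b := hqb.symm
          _ < ENNReal.ofReal (F x) := (ENNReal.ofReal_lt_ofReal_iff hfx).2 hbx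
      have h0 : volume.restrict (Ioi (0:ℝ)) ({x : ℝ | b < F x} ∩ Ioi 0) = 0 :=
        measure_mono_null hsub hae
      rw [Measure.restrict_apply' measurableSet_Ioi, inter_assoc, inter_self] at h0
      exact absurd h0 hpos.ne'
end

section
/- Let λ > 0, b ≥ 0, a > 0 with a + b ≤ λ, and let ω(x) = λ e^{λx + b|x|}/(1 + e^{λx})² for x ∈ ℝ, and κ_a(x) = e^{−a|x|}. Then ‖ω/κ_a‖_{L_∞(ℝ)} = (λ/4)·(1 + (a+b)/λ)^{1+(a+b)/λ}·(1 − (a+b)/λ)^{1−(a+b)/λ}, with the convention 0^0 = 1; in particular, if a + b = λ then ‖ω/κ_a‖_{L_∞(ℝ)} = λ. -/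
open MeasureTheory Real Set
open scoped ENNReal

private lemma key1 (p t : ℝ) (hp : 0 < p) (hp2 : p < 2) (ht : 0 < t) :
    t ^ p * 4 ≤ p ^ p * (2 - p) ^ (2 - p) * (1 + t) ^ 2 := by
  have h2p : 0 < 2 - p := by linarith
  have hx : (0:ℝ) < 2 * t / p := by positivity
  have hy : (0:ℝ) < 2 / (2 - p) := by positivity
  have h := Real.geom_mean_le_arith_mean2_weighted (by positivity : (0:ℝ) ≤ p / 2)
    (by positivity : (0:ℝ) ≤ (2 - p) / 2) hx.le hy.le (by ring)
  have hsum : p / 2 * (2 * t / p) + (2 - p) / 2 * (2 / (2 - p)) = 1 + t := by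
    field_simp; ring
  rw [hsum] at h
  set A := (2 * t / p) ^ (p / 2) * (2 / (2 - p)) ^ ((2 - p) / 2) with hA
  have hA0 : 0 ≤ A := by positivity
  have hsq : A * A ≤ (1 + t) * (1 + t) := mul_self_le_mul_self hA0 h
  have hAA : A * A = (2 * t / p) ^ p * (2 / (2 - p)) ^ (2 - p) := by
    rw [hA]
    rw [show (2 * t / p) ^ (p / 2) * (2 / (2 - p)) ^ ((2 - p) / 2) *
        ((2 * t / p) ^ (p / 2) * (2 / (2 - p)) ^ ((2 - p) / 2)) =
        ((2 * t / p) ^ (p / 2) * (2 * t / p) ^ (p / 2)) *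
        ((2 / (2 - p)) ^ ((2 - p) / 2) * (2 / (2 - p)) ^ ((2 - p) / 2)) by ring,
      ← Real.rpow_add hx, ← Real.rpow_add hy]
    norm_num
  rw [hAA] at hsq
  have e1 : (2 * t / p) ^ p = 2 ^ p * t ^ p / p ^ p := by
    rw [Real.div_rpow (by positivity) hp.le, Real.mul_rpow (by norm_num) ht.le]
  have e2 : (2 / (2 - p)) ^ (2 - p) = 2 ^ (2 - p) / (2 - p) ^ (2 - p) := by
    rw [Real.div_rpow (by norm_num) h2p.le]
  have e3 : (2:ℝ) ^ p * 2 ^ (2 - p) = 4 := by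
    rw [← Real.rpow_add (by norm_num : (0:ℝ) < 2)]
    norm_num
  have hpp : (0:ℝ) < p ^ p := Real.rpow_pos_of_pos hp _
  have hqq : (0:ℝ) < (2 - p) ^ (2 - p) := Real.rpow_pos_of_pos h2p _
  have htp : (0:ℝ) < t ^ p := Real.rpow_pos_of_pos ht _
  rw [e1, e2] at hsq
  have hsq' : 4 * t ^ p / (p ^ p * (2 - p) ^ (2 - p)) ≤ (1 + t) * (1 + t) := by
    calc 4 * t ^ p / (p ^ p * (2 - p) ^ (2 - p))
        = 2 ^ p * t ^ p / p ^ p * (2 ^ (2 - p) / (2 - p) ^ (2 - p)) := by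
          rw [div_mul_div_comm]
          rw [show (2:ℝ) ^ p * t ^ p * (2 ^ (2 - p)) = (2 ^ p * 2 ^ (2-p)) * t ^ p by ring, e3]
      _ ≤ (1 + t) * (1 + t) := hsq
  rw [div_le_iff₀ (by positivity)] at hsq'
  nlinarith [hsq']

private lemma key (p t : ℝ) (hp : 0 ≤ p) (hp2 : p ≤ 2) (ht : 0 < t) :
    t ^ p * 4 ≤ p ^ p * (2 - p) ^ (2 - p) * (1 + t) ^ 2 := by
  rcases eq_or_lt_of_le hp with h0 | h0
  · rw [← h0]
    norm_num
    rw [abs_of_pos (by linarith : (0:ℝ) < 1 + t)]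
    linarith
  rcases eq_or_lt_of_le hp2 with h2 | h2
  · rw [h2]
    norm_num
    nlinarith [ht]
  · exact key1 p t h0 h2 ht

private lemma bound' (lam p t : ℝ) (hlam : 0 < lam) (hp : 0 ≤ p) (hp2 : p ≤ 2) (ht : 0 < t) :
    lam * t ^ p / (1 + t) ^ 2 ≤ lam / 4 * (p ^ p * (2 - p) ^ (2 - p)) := by
  rw [div_le_iff₀ (by positivity)]
  have h := key p t hp hp2 ht
  nlinarith [mul_le_mul_of_nonneg_left h (le_of_lt (by positivity : (0:ℝ) < lam / 4))]

/-- For the logistic-over-exponential weight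
`ω(x) = λ e^{λx + b|x|}/(1 + e^{λx})²` and `κ_a(x) = e^{−a|x|}` with `0 < a`, `0 ≤ b`,
`a + b ≤ λ`, one has
`‖ω/κ_a‖_{L_∞(ℝ)} = (λ/4)(1 + (a+b)/λ)^{1+(a+b)/λ}(1 − (a+b)/λ)^{1−(a+b)/λ}`
(real powers, so the convention `0⁰ = 1` holds); in particular the value is `λ` when
`a + b = λ`. -/
theorem stmt_17 (lam b a : ℝ) (hlam : 0 < lam) (hb : 0 ≤ b) (ha : 0 < a)
    (hab : a + b ≤ lam) (ω κ : ℝ → ℝ)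
    (hω : ω = fun x : ℝ =>
      lam * Real.exp (lam * x + b * |x|) / (1 + Real.exp (lam * x)) ^ 2)
    (hκ : κ = fun x : ℝ => Real.exp (-(a * |x|))) :
    eLpNorm (fun x => ω x / κ x) ⊤ volume
      = ENNReal.ofReal
          (lam / 4 * (1 + (a + b) / lam) ^ (1 + (a + b) / lam)
            * (1 - (a + b) / lam) ^ (1 - (a + b) / lam))
    ∧ (a + b = lam → eLpNorm (fun x => ω x / κ x) ⊤ volume = ENNReal.ofReal lam) := by
  set c : ℝ := (a + b) / lam with hc
  have hc0 : 0 < c := div_pos (by linarith) hlam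
  have hc1 : c ≤ 1 := (div_le_one hlam).2 hab
  have hab' : a + b = c * lam := by rw [hc]; field_simp
  set F : ℝ → ℝ := fun x =>
    lam * Real.exp (lam * x + (a + b) * |x|) / (1 + Real.exp (lam * x)) ^ 2 with hF
  have hfun : (fun x => ω x / κ x) = F := by
    funext x
    rw [hω, hκ, hF]
    simp only
    rw [Real.exp_neg, div_eq_mul_inv, inv_inv, div_mul_eq_mul_div, mul_assoc, ← Real.exp_add]
    ring_nf
  set M : ℝ := lam / 4 * (1 + c) ^ (1 + c) * (1 - c) ^ (1 - c) with hM
  have hpowp : (0:ℝ) < (1 + c) ^ (1 + c) := Real.rpow_pos_of_pos (by linarith) _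
  have hpowm : (0:ℝ) < (1 - c) ^ (1 - c) := by
    rcases eq_or_lt_of_le hc1 with h | h
    · rw [← h]; norm_num
    · exact Real.rpow_pos_of_pos (by linarith) _
  have hMpos : 0 < M := by
    rw [hM]; exact mul_pos (mul_pos (by positivity) hpowp) hpowm
  -- pointwise bound
  have hF0 : ∀ x, 0 ≤ F x := fun x => by rw [hF]; positivity
  have hbound : ∀ x, F x ≤ M := by
    intro x
    have ht : 0 < Real.exp (lam * x) := Real.exp_pos _
    rcases le_or_gt 0 x with hx | hx
    · have hexp : Real.exp (lam * x + (a + b) * |x|) = Real.exp (lam * x) ^ (1 + c) := by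
        rw [Real.rpow_def_of_pos ht, Real.log_exp, abs_of_nonneg hx, hab']
        ring_nf
      rw [hF]; simp only; rw [hexp]
      have h := bound' lam (1 + c) (Real.exp (lam * x)) hlam (by linarith) (by linarith) ht
      rw [show (2:ℝ) - (1 + c) = 1 - c by ring] at h
      calc lam * Real.exp (lam * x) ^ (1 + c) / (1 + Real.exp (lam * x)) ^ 2
          ≤ lam / 4 * ((1 + c) ^ (1 + c) * (1 - c) ^ (1 - c)) := h
        _ = M := by rw [hM]; ring
    · have hexp : Real.exp (lam * x + (a + b) * |x|) = Real.exp (lam * x) ^ (1 - c) := by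
        rw [Real.rpow_def_of_pos ht, Real.log_exp, abs_of_neg hx, hab']
        ring_nf
      rw [hF]; simp only; rw [hexp]
      have h := bound' lam (1 - c) (Real.exp (lam * x)) hlam (by linarith) (by linarith) ht
      rw [show (2:ℝ) - (1 - c) = 1 + c by ring] at h
      calc lam * Real.exp (lam * x) ^ (1 - c) / (1 + Real.exp (lam * x)) ^ 2
          ≤ lam / 4 * ((1 - c) ^ (1 - c) * (1 + c) ^ (1 + c)) := h
        _ = M := by rw [hM]; ring
  -- near-attainment
  have hex : ∀ r : ℝ, r < M → ∃ x, r < F x := by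
    intro r hr
    rcases eq_or_lt_of_le hc1 with hceq | hclt
    · -- c = 1 : supremum is lam, approached at +∞
      have habl : a + b = lam := by rw [hab', hceq, one_mul]
      have hMlam : M = lam := by rw [hM, hceq]; norm_num
      have h1 : Filter.Tendsto (fun x : ℝ => lam * x) Filter.atTop Filter.atTop :=
        Filter.Tendsto.const_mul_atTop hlam Filter.tendsto_id
      have h2 : Filter.Tendsto (fun x : ℝ => Real.exp (-(lam * x))) Filter.atTop (nhds 0) :=
        Real.tendsto_exp_atBot.comp (Filter.tendsto_neg_atTop_atBot.comp h1)
      have h3 : Filter.Tendsto (fun u : ℝ => lam / (u + 1) ^ 2) (nhds 0) (nhds lam) := by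
        have hca : ContinuousAt (fun u : ℝ => lam / (u + 1) ^ 2) 0 :=
          ContinuousAt.div continuousAt_const (by fun_prop) (by norm_num)
        have := hca.tendsto
        simpa using this
      have h4 := h3.comp h2
      have hr' : r < lam := hMlam ▸ hr
      obtain ⟨x, hx1, hx2⟩ :=
        ((h4.eventually (eventually_gt_nhds hr')).and (Filter.eventually_ge_atTop (0:ℝ))).exists
      refine ⟨x, ?_⟩
      have hE : 0 < Real.exp (lam * x) := Real.exp_pos _
      have heq : lam / (Real.exp (-(lam * x)) + 1) ^ 2 = F x := by
        rw [hF]; simp only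
        rw [abs_of_nonneg hx2, habl, Real.exp_neg, Real.exp_add]
        field_simp
      rw [← heq]
      exact hx1
    · -- c < 1 : maximum attained
      set t₀ : ℝ := (1 + c) / (1 - c) with ht₀def
      have h1c : (0:ℝ) < 1 - c := by linarith
      have ht₀ : 0 < t₀ := by positivity
      set x₀ : ℝ := Real.log t₀ / lam with hx₀def
      have hlx : lam * x₀ = Real.log t₀ := by rw [hx₀def]; field_simp
      have ht₀1 : 1 ≤ t₀ := by rw [ht₀def, le_div_iff₀ h1c]; linarith
      have hx₀ : 0 ≤ x₀ := by
        rw [hx₀def]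
        exact div_nonneg (Real.log_nonneg ht₀1) hlam.le
      have hexp0 : Real.exp (lam * x₀) = t₀ := by rw [hlx, Real.exp_log ht₀]
      have hval : F x₀ = M := by
        have hexp : Real.exp (lam * x₀ + (a + b) * |x₀|) = t₀ ^ (1 + c) := by
          rw [← hexp0, Real.rpow_def_of_pos (Real.exp_pos _), Real.log_exp,
            abs_of_nonneg hx₀, hab']
          ring_nf
        rw [hF]; simp only
        rw [hexp, hexp0]
        have h1t : 1 + t₀ = 2 / (1 - c) := by rw [ht₀def]; field_simp; ring
        have e1 : t₀ ^ (1 + c) = (1 + c) ^ (1 + c) / (1 - c) ^ (1 + c) := by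
          rw [ht₀def, Real.div_rpow (by linarith) h1c.le]
        have e2 : (1 + t₀) ^ 2 = 4 / (1 - c) ^ 2 := by
          rw [h1t, div_pow]; norm_num
        have epow : (1 - c) ^ (1 - c) * (1 - c) ^ (1 + c) = (1 - c) ^ (2:ℕ) := by
          rw [← Real.rpow_add h1c, show (1 - c) + (1 + c) = ((2:ℕ):ℝ) by push_cast; ring,
            Real.rpow_natCast]
        rw [e1, e2, hM]
        have hp1 : (0:ℝ) < (1 - c) ^ (1 + c) := Real.rpow_pos_of_pos h1c _
        clear_value c
        field_simp
        linear_combination epow.symm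
      exact ⟨x₀, hval ▸ hr⟩
  -- main essSup computation
  have hcont : Continuous F := by
    rw [hF]
    apply Continuous.div (by fun_prop) (by fun_prop)
    intro x
    positivity
  have hmain : eLpNorm (fun x => ω x / κ x) ⊤ volume = ENNReal.ofReal M := by
    rw [hfun, eLpNorm_exponent_top]
    refine le_antisymm ?_ ?_
    · exact eLpNormEssSup_le_of_ae_bound (ae_of_all _ fun x => by
        rw [Real.norm_of_nonneg (hF0 x)]; exact hbound x)
    · by_contra h
      push_neg at h
      have hStop : eLpNormEssSup F volume ≠ ⊤ := (h.trans ENNReal.ofReal_lt_top).ne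
      have hNM : (eLpNormEssSup F volume).toReal < M := by
        have := (ENNReal.toReal_lt_toReal hStop ENNReal.ofReal_ne_top).mpr h
        rwa [ENNReal.toReal_ofReal hMpos.le] at this
      set N : ℝ := (eLpNormEssSup F volume).toReal with hN
      set r : ℝ := (N + M) / 2 with hrdef
      have hr1 : N < r := by rw [hrdef]; linarith
      have hr2 : r < M := by rw [hrdef]; linarith
      have hae : ∀ᵐ x ∂(volume : Measure ℝ), F x ≤ N := by
        filter_upwards [ae_le_eLpNormEssSup (f := F) (μ := volume)] with x hx
        have h2 := ENNReal.toReal_mono hStop hx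
        simpa [Real.norm_of_nonneg (hF0 x)] using h2
      have hnull : volume {x | r < F x} = 0 := by
        refine measure_mono_null (fun x hx => ?_) (ae_iff.mp hae)
        simp only [mem_setOf_eq] at hx ⊢
        linarith
      obtain ⟨x, hx⟩ := hex r hr2
      have hopen : IsOpen {x | r < F x} := isOpen_lt continuous_const hcont
      exact absurd hnull (ne_of_gt (hopen.measure_pos volume ⟨x, hx⟩))
  refine ⟨hmain, fun hl => ?_⟩
  rw [hmain]
  congr 1
  have hc1' : c = 1 := by rw [hc, hl, div_self hlam.ne']
  rw [hM, hc1']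
  norm_num
end

section
/- Let λ > 0, b ≥ 0, α ≥ 1, and let ω(x) = λ e^{λx + b|x|}/(1 + e^{λx})² for x ∈ ℝ. Then ‖ω^{1/α}‖_{L_1(ℝ)}^α = λ·(2∫_0^∞ e^{(λ+b)x/α}/(1 + e^{λx})^{2/α} dx)^α ≥ λ·(α/λ)^α (where the value may be +∞). -/
open MeasureTheory Real Set Filter
open scoped ENNReal Topology

private lemma aux_rpow_form {lam α : ℝ} (t s : ℝ) (hlam : 0 < lam) (hα : 0 < α) :
    (lam * Real.exp t / (1 + Real.exp s) ^ 2) ^ (1 / α)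
      = lam ^ (1 / α) * (Real.exp (t / α) / (1 + Real.exp s) ^ (2 / α)) := by
  have hs : (0:ℝ) < 1 + Real.exp s := by positivity
  rw [Real.div_rpow (by positivity) (by positivity),
      Real.mul_rpow hlam.le (Real.exp_pos t).le,
      ← Real.exp_mul, mul_one_div,
      ← Real.rpow_natCast (1 + Real.exp s) 2, ← Real.rpow_mul hs.le]
  rw [show ((2:ℕ):ℝ) * (1/α) = 2/α by push_cast; ring, mul_div_assoc]

private lemma aux_subadd {α : ℝ} (A : ℝ) (hA : 0 ≤ A) (hα : 1 ≤ α) :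
    (1 + A) ^ (1/α) ≤ 1 + A ^ (1/α) := by
  have h1 : (0:ℝ) ≤ 1/α := by positivity
  have h2 : 1/α ≤ 1 := by
    rw [div_le_one (by linarith)]; linarith
  have h := NNReal.rpow_add_le_add_rpow 1 A.toNNReal h1 h2
  rw [← Real.coe_toNNReal A hA]
  exact_mod_cast by simpa using h

private lemma aux_neg (lam b x : ℝ) (hx : 0 ≤ x) :
    lam * Real.exp (lam * -x + b * |(-x)|) / (1 + Real.exp (lam * -x)) ^ 2
      = lam * Real.exp ((lam + b) * x) / (1 + Real.exp (lam * x)) ^ 2 := by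
  rw [abs_neg, abs_of_nonneg hx]
  have e1 : Real.exp (lam * -x + b * x) = (Real.exp (lam * x))⁻¹ * Real.exp (b * x) := by
    rw [← Real.exp_neg, ← Real.exp_add]; congr 1; ring
  have e2 : Real.exp (lam * -x) = (Real.exp (lam * x))⁻¹ := by
    rw [← Real.exp_neg]; congr 1; ring
  have e3 : Real.exp ((lam + b) * x) = Real.exp (lam * x) * Real.exp (b * x) := by
    rw [← Real.exp_add]; congr 1; ring
  rw [e1, e2, e3]
  have hE : (0:ℝ) < Real.exp (lam * x) := Real.exp_pos _
  field_simp
  ring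

private lemma aux_deriv {c : ℝ} (hc : 0 < c) (x : ℝ) :
    HasDerivAt (fun x : ℝ => -(c * (1 + Real.exp (c * x)))⁻¹)
      (Real.exp (c * x) / (1 + Real.exp (c * x)) ^ 2) x := by
  have h1 : HasDerivAt (fun x : ℝ => c * x) c x := by
    simpa using (hasDerivAt_id x).const_mul c
  have h3 : HasDerivAt (fun x : ℝ => 1 + Real.exp (c * x)) (Real.exp (c * x) * c) x :=
    h1.exp.const_add 1
  have h5 := ((h3.const_mul c).inv (by positivity)).neg
  refine h5.congr_deriv ?_
  have hp : (0:ℝ) < 1 + Real.exp (c * x) := by positivity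
  field_simp

/-- For `λ > 0`, `b ≥ 0`, `α ≥ 1` and the weight
`ω(x) = λ e^{λx + b|x|}/(1 + e^{λx})²` on `ℝ` one has
`‖ω^{1/α}‖_{L₁(ℝ)}^α = λ (2∫₀^∞ e^{(λ+b)x/α}/(1 + e^{λx})^{2/α} dx)^α ≥ λ (α/λ)^α`,
where the value may be `+∞` (so the computation is carried out in `ℝ≥0∞`). -/
theorem stmt_18 (lam b α : ℝ) (hlam : 0 < lam) (hb : 0 ≤ b) (hα : 1 ≤ α)
    (ω : ℝ → ℝ)
    (hω : ω = fun x : ℝ =>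
      lam * Real.exp (lam * x + b * |x|) / (1 + Real.exp (lam * x)) ^ 2) :
    (∫⁻ x : ℝ, ENNReal.ofReal (ω x ^ (1 / α))) ^ α
      = ENNReal.ofReal lam
          * (2 * ∫⁻ x in Set.Ioi (0:ℝ),
              ENNReal.ofReal
                (Real.exp ((lam + b) * x / α) / (1 + Real.exp (lam * x)) ^ (2 / α))) ^ α
    ∧ ENNReal.ofReal (lam * (α / lam) ^ α)
        ≤ (∫⁻ x : ℝ, ENNReal.ofReal (ω x ^ (1 / α))) ^ α := by
  subst hω
  have hα0 : (0:ℝ) < α := lt_of_lt_of_le one_pos hα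
  set C : ℝ≥0∞ := ENNReal.ofReal (lam ^ (1/α)) with hC
  set g : ℝ → ℝ≥0∞ := fun x =>
    ENNReal.ofReal (Real.exp ((lam + b) * x / α) / (1 + Real.exp (lam * x)) ^ (2 / α)) with hg
  set F : ℝ → ℝ≥0∞ := fun x =>
    ENNReal.ofReal
      ((lam * Real.exp (lam * x + b * |x|) / (1 + Real.exp (lam * x)) ^ 2) ^ (1 / α)) with hF
  set J : ℝ≥0∞ := ∫⁻ x in Set.Ioi (0:ℝ), g x with hJ
  -- continuity / measurability
  have hcontω : Continuous fun x : ℝ =>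
      lam * Real.exp (lam * x + b * |x|) / (1 + Real.exp (lam * x)) ^ 2 := by
    apply Continuous.div (by continuity) (by continuity)
    intro x; positivity
  have hmeasF : Measurable F := by
    apply Measurable.ennreal_ofReal
    exact (hcontω.rpow_const (fun x => Or.inr (by positivity))).measurable
  have hmeasg : Measurable g := by
    apply Measurable.ennreal_ofReal
    have hnum : Continuous fun x : ℝ => Real.exp ((lam + b) * x / α) := by
      apply Real.continuous_exp.comp
      exact (continuous_const.mul continuous_id).div_const α
    apply Measurable.div hnum.measurable
    apply Continuous.measurable
    apply Continuous.rpow_const (by continuity)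
    intro x; right; positivity
  -- pointwise identifications
  have hpt : ∀ x : ℝ, 0 ≤ x → F x = C * g x := by
    intro x hx
    simp only [hF, hg, hC]
    rw [abs_of_nonneg hx, show lam * x + b * x = (lam + b) * x by ring,
      aux_rpow_form ((lam + b) * x) (lam * x) hlam hα0,
      ENNReal.ofReal_mul (by positivity)]
  have hptneg : ∀ x : ℝ, 0 ≤ x → F (-x) = C * g x := by
    intro x hx
    simp only [hF, hg, hC]
    rw [aux_neg lam b x hx, aux_rpow_form ((lam + b) * x) (lam * x) hlam hα0,
      ENNReal.ofReal_mul (by positivity)]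
  -- splitting the integral
  have hIci : ∫⁻ x in Set.Ici (0:ℝ), F x = C * J := by
    rw [← setLIntegral_congr (Ioi_ae_eq_Ici (a := (0:ℝ))), hJ, ← lintegral_const_mul C hmeasg]
    exact setLIntegral_congr_fun measurableSet_Ioi (fun x hx => hpt x (le_of_lt hx))
  have hIio : ∫⁻ x in Set.Iio (0:ℝ), F x = C * J := by
    have hmap : Measure.map Neg.neg (volume : Measure ℝ) = volume :=
      (Measure.measurePreserving_neg _).map_eq
    nth_rewrite 1 [← hmap]
    rw [setLIntegral_map measurableSet_Iio hmeasF measurable_neg]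
    have hpre : Neg.neg ⁻¹' Set.Iio (0:ℝ) = Set.Ioi 0 := by ext y; simp
    rw [hpre, hJ, ← lintegral_const_mul C hmeasg]
    exact setLIntegral_congr_fun measurableSet_Ioi
      (fun x hx => hptneg x (le_of_lt hx))
  have hL : ∫⁻ x : ℝ, F x = C * (2 * J) := by
    rw [← lintegral_add_compl F measurableSet_Ici, compl_Ici, hIci, hIio]
    ring
  have hCα : C ^ α = ENNReal.ofReal lam := by
    rw [hC, ENNReal.ofReal_rpow_of_pos (by positivity), ← Real.rpow_mul hlam.le,
      one_div_mul_cancel (ne_of_gt hα0), Real.rpow_one]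
  constructor
  · rw [hL, ENNReal.mul_rpow_of_nonneg _ _ (le_of_lt hα0), hCα]
  · -- lower bound
    set c : ℝ := lam / α with hc'
    have hc : 0 < c := by positivity
    set H : ℝ → ℝ := fun x => Real.exp (c * x) / (1 + Real.exp (c * x)) ^ 2 with hH
    have hce : Continuous fun x : ℝ => Real.exp (c * x) :=
      Real.continuous_exp.comp (continuous_const.mul continuous_id)
    have hHc : Continuous H := by
      apply Continuous.div hce ((continuous_const.add hce).pow 2)
      intro x; simp only [Pi.pow_apply, Pi.add_apply]; positivity
    have hHnn : ∀ x, 0 ≤ H x := fun x => by simp only [hH]; positivity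
    -- pointwise lower bound
    have hptlow : ∀ x : ℝ, ENNReal.ofReal (lam ^ (1/α) * H x) ≤ F x := by
      intro x
      apply ENNReal.ofReal_le_ofReal
      rw [aux_rpow_form (lam * x + b * |x|) (lam * x) hlam hα0]
      refine mul_le_mul_of_nonneg_left ?_ (by positivity)
      have he : Real.exp (lam * x) ^ (1/α) = Real.exp (c * x) := by
        rw [← Real.exp_mul]; congr 1; rw [hc']; field_simp
      have hden : (1 + Real.exp (lam * x)) ^ (2/α) ≤ (1 + Real.exp (c * x)) ^ 2 := by
        have h1 : (1 + Real.exp (lam * x)) ^ (1/α) ≤ 1 + Real.exp (c * x) := by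
          have h := aux_subadd (Real.exp (lam * x)) (Real.exp_pos _).le hα
          rwa [he] at h
        calc (1 + Real.exp (lam * x)) ^ (2/α)
            = ((1 + Real.exp (lam * x)) ^ (1/α)) ^ 2 := by
              rw [← Real.rpow_natCast ((1 + Real.exp (lam * x)) ^ (1/α)) 2,
                ← Real.rpow_mul (by positivity)]
              congr 1; push_cast; ring
          _ ≤ (1 + Real.exp (c * x)) ^ 2 := by
              apply pow_le_pow_left₀ (by positivity) h1
      have hnum : Real.exp (c * x) ≤ Real.exp ((lam * x + b * |x|) / α) := by
        apply Real.exp_le_exp.mpr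
        rw [show c * x = (lam * x) / α by rw [hc']; ring]
        exact (div_le_div_iff_of_pos_right hα0).mpr (le_add_of_nonneg_right (by positivity))
      exact div_le_div₀ (Real.exp_pos _).le hnum (by positivity) hden
    -- integral lower bound via FTC and limits
    have hmeasH : Measurable fun x => ENNReal.ofReal (H x) :=
      hHc.measurable.ennreal_ofReal
    have key : ∀ n : ℝ, 0 ≤ n →
        ENNReal.ofReal (-(c * (1 + Real.exp (c * n)))⁻¹ - -(c * (1 + Real.exp (c * (-n))))⁻¹)
          ≤ ∫⁻ x : ℝ, ENNReal.ofReal (H x) := by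
      intro n hn
      have hle : (-n:ℝ) ≤ n := by linarith
      have hint : ∫ x in (-n)..n, H x
          = -(c * (1 + Real.exp (c * n)))⁻¹ - -(c * (1 + Real.exp (c * (-n))))⁻¹ :=
        intervalIntegral.integral_eq_sub_of_hasDerivAt (fun x _ => aux_deriv hc x)
          (hHc.intervalIntegrable _ _)
      rw [← hint, intervalIntegral.integral_of_le hle,
        ofReal_integral_eq_lintegral_ofReal
          (hHc.integrableOn_Ioc.mono_set (subset_refl _))
          (ae_of_all _ fun x => hHnn x)]
      exact setLIntegral_le_lintegral _ _
    have htend : Tendsto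
        (fun n : ℝ => -(c * (1 + Real.exp (c * n)))⁻¹ - -(c * (1 + Real.exp (c * (-n))))⁻¹)
        atTop (𝓝 c⁻¹) := by
      have t1 : Tendsto (fun n : ℝ => (c * (1 + Real.exp (c * n)))⁻¹) atTop (𝓝 0) := by
        apply Tendsto.inv_tendsto_atTop
        apply Tendsto.const_mul_atTop hc
        apply tendsto_atTop_add_const_left
        exact Real.tendsto_exp_atTop.comp (Tendsto.const_mul_atTop hc tendsto_id)
      have t2 : Tendsto (fun n : ℝ => Real.exp (c * (-n))) atTop (𝓝 0) := by
        apply Real.tendsto_exp_atBot.comp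
        have h : Tendsto (fun n : ℝ => c * n) atTop atTop :=
          Tendsto.const_mul_atTop hc tendsto_id
        have h2 : Tendsto (fun n : ℝ => -(c * n)) atTop atBot :=
          tendsto_neg_atTop_atBot.comp h
        simpa [mul_neg] using h2
      have t3 : Tendsto (fun n : ℝ => (c * (1 + Real.exp (c * (-n))))⁻¹) atTop (𝓝 c⁻¹) := by
        have t3a : Tendsto (fun n : ℝ => c * (1 + Real.exp (c * (-n)))) atTop (𝓝 (c * (1+0))) :=
          (tendsto_const_nhds.add t2).const_mul c
        have t3b := t3a.inv₀ (by simp [hc.ne'])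
        simpa using t3b
      have := (t1.neg).sub (t3.neg)
      simpa using this
    have hlowint : ENNReal.ofReal c⁻¹ ≤ ∫⁻ x : ℝ, ENNReal.ofReal (H x) := by
      have htend2 := (ENNReal.continuous_ofReal.tendsto _).comp htend
      refine le_of_tendsto htend2 ?_
      filter_upwards [eventually_ge_atTop (0:ℝ)] with n hn using key n hn
    have hL2 : ENNReal.ofReal (lam ^ (1/α)) * ENNReal.ofReal c⁻¹ ≤ ∫⁻ x : ℝ, F x :=
      calc ENNReal.ofReal (lam ^ (1/α)) * ENNReal.ofReal c⁻¹
          ≤ ENNReal.ofReal (lam ^ (1/α)) * ∫⁻ x : ℝ, ENNReal.ofReal (H x) :=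
            mul_le_mul_right hlowint _
        _ = ∫⁻ x : ℝ, ENNReal.ofReal (lam ^ (1/α)) * ENNReal.ofReal (H x) :=
            (lintegral_const_mul _ hmeasH).symm
        _ = ∫⁻ x : ℝ, ENNReal.ofReal (lam ^ (1/α) * H x) := by
            congr 1; funext x; rw [ENNReal.ofReal_mul (by positivity)]
        _ ≤ ∫⁻ x : ℝ, F x := lintegral_mono hptlow
    have hL2' : ENNReal.ofReal (lam ^ (1/α) * (α / lam)) ≤ ∫⁻ x : ℝ, F x := by
      rw [ENNReal.ofReal_mul (by positivity)]
      have : c⁻¹ = α / lam := by rw [hc', inv_div]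
      rw [← this]
      exact hL2
    have hfin : ENNReal.ofReal (lam * (α / lam) ^ α)
        = ENNReal.ofReal (lam ^ (1/α) * (α / lam)) ^ α := by
      rw [ENNReal.ofReal_rpow_of_pos (by positivity),
        Real.mul_rpow (by positivity) (by positivity),
        ← Real.rpow_mul hlam.le, one_div_mul_cancel (ne_of_gt hα0), Real.rpow_one]
    rw [hfin]
    exact ENNReal.rpow_le_rpow hL2' (le_of_lt hα0)
end
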